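/- arXiv:1405.6305 — 5 statements merged into one kernel-verified Lean document; each statement's English description precedes it below -/
import Mathlib

section
/- For every θ > 0 and every bounded measurable 2π-periodic function f : ℝ → ℂ, lim_{t → ∞} ∫_0^∞ f(x) · (θ^t / Γ(t)) · x^{t−1} e^{−θx} dx = (1/(2π)) ∫_0^{2π} f(y) dy; that is, the Gamma(t, θ) law taken modulo 2π converges to the uniform law on [0, 2π) as the shape parameter t → ∞. -/
open MeasureTheory Filter Real Set

namespace GammaModAux


variable {θ t : ℝ}

/-- unnormalized gamma density -/
noncomputable def q (θ t x : ℝ) : ℝ := x ^ (t - 1) * Real.exp (-θ * x)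

lemma q_hasDerivAt (hx : (0:ℝ) < x) :
    HasDerivAt (q θ t) (((t - 1) * x ^ (t - 2) - θ * x ^ (t - 1)) * Real.exp (-θ * x)) x := by
  have h1 : HasDerivAt (fun y : ℝ => y ^ (t - 1)) ((t - 1) * x ^ (t - 1 - 1)) x :=
    Real.hasDerivAt_rpow_const (Or.inl hx.ne')
  have h2 : HasDerivAt (fun y : ℝ => Real.exp (-θ * y)) (Real.exp (-θ * x) * (-θ * 1)) x :=
    ((hasDerivAt_id x).const_mul (-θ)).exp
  have := h1.mul h2
  have ht2 : t - 1 - 1 = t - 2 := by ring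
  rw [ht2] at this
  exact this.congr_deriv (by ring)

lemma q_nonneg (hx : (0:ℝ) ≤ x) : 0 ≤ q θ t x :=
  mul_nonneg (Real.rpow_nonneg hx _) (Real.exp_pos _).le

lemma q_zero (ht : 1 < t) : q θ t 0 = 0 := by
  simp [q, Real.zero_rpow (by linarith : t - 1 ≠ 0)]

lemma q_continuousOn (ht : 1 < t) : ContinuousOn (q θ t) (Set.Ici 0) := by
  apply ContinuousOn.mul
  · intro x _
    exact (Real.continuousAt_rpow_const x (t-1) (Or.inr (by linarith))).continuousWithinAt
  · exact (Real.continuous_exp.comp (continuous_const.mul continuous_id)).continuousOn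

lemma q_monotoneOn (hθ : 0 < θ) (ht : 1 < t) :
    MonotoneOn (q θ t) (Set.Icc 0 ((t-1)/θ)) := by
  have hm : 0 < (t-1)/θ := div_pos (by linarith) hθ
  apply monotoneOn_of_deriv_nonneg (convex_Icc _ _)
      ((q_continuousOn ht).mono (Set.Icc_subset_Ici_self))
  · intro x hx
    rw [interior_Icc] at hx
    exact (q_hasDerivAt hx.1).differentiableAt.differentiableWithinAt
  · intro x hx
    rw [interior_Icc] at hx
    rw [(q_hasDerivAt hx.1).deriv]
    have hx0 := hx.1
    have hxm : θ * x ≤ t - 1 := by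
      have := hx.2
      rw [lt_div_iff₀ hθ] at this
      nlinarith
    have hsplit : x ^ (t-1) = x ^ (t-2) * x := by
      rw [← Real.rpow_add_one hx0.ne' (t-2)]; ring_nf
    have hp : (0:ℝ) ≤ x ^ (t-2) := Real.rpow_nonneg hx0.le _
    have : 0 ≤ (t - 1) * x ^ (t - 2) - θ * x ^ (t - 1) := by
      rw [hsplit]; nlinarith
    positivity

lemma q_antitoneOn (hθ : 0 < θ) (ht : 1 < t) :
    AntitoneOn (q θ t) (Set.Ici ((t-1)/θ)) := by
  have hm : 0 < (t-1)/θ := div_pos (by linarith) hθ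
  apply antitoneOn_of_deriv_nonpos (convex_Ici _)
      ((q_continuousOn ht).mono (by intro x hx; simp only [Set.mem_Ici] at *; linarith))
  · intro x hx
    rw [interior_Ici] at hx
    exact (q_hasDerivAt (hm.trans hx)).differentiableAt.differentiableWithinAt
  · intro x hx
    rw [interior_Ici] at hx
    have hx0 : 0 < x := hm.trans hx
    rw [(q_hasDerivAt hx0).deriv]
    have hxm : t - 1 ≤ θ * x := by
      have : (t-1)/θ < x := hx
      rw [div_lt_iff₀ hθ] at this; nlinarith
    have hsplit : x ^ (t-1) = x ^ (t-2) * x := by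
      rw [← Real.rpow_add_one hx0.ne' (t-2)]; ring_nf
    have hp : (0:ℝ) ≤ x ^ (t-2) := Real.rpow_nonneg hx0.le _
    have h1 : (t - 1) * x ^ (t - 2) - θ * x ^ (t - 1) ≤ 0 := by
      rw [hsplit]; nlinarith
    have h2 : (0:ℝ) < Real.exp (-θ * x) := Real.exp_pos _
    nlinarith

lemma q_le_max (hθ : 0 < θ) (ht : 1 < t) (hx : (0:ℝ) ≤ x) :
    q θ t x ≤ q θ t ((t-1)/θ) := by
  have hm : 0 < (t-1)/θ := div_pos (by linarith) hθ
  rcases le_total x ((t-1)/θ) with h | h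
  · exact q_monotoneOn hθ ht ⟨hx, h⟩ ⟨hm.le, le_refl _⟩ h
  · exact q_antitoneOn hθ ht Set.self_mem_Ici h h



lemma key_log (ht : 2 ≤ t) :
    Real.sqrt t - 2 ≤ (t-1) * (Real.log (t-1+Real.sqrt t) - Real.log (t-1)) := by
  set s := Real.sqrt t with hsdef
  have hs1 : 1 ≤ s := by
    rw [hsdef, show (1:ℝ) = Real.sqrt 1 by simp]
    exact Real.sqrt_le_sqrt (by linarith)
  have hs2 : s^2 = t := Real.sq_sqrt (by linarith)
  have ht1 : (1:ℝ) ≤ t - 1 := by linarith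
  have hu : (0:ℝ) < 1 + s/(t-1) := by positivity
  have hlog : 1 - (1 + s/(t-1))⁻¹ ≤ Real.log (1 + s/(t-1)) :=
    Real.one_sub_inv_le_log_of_pos hu
  have hls : Real.log (1 + s/(t-1)) = Real.log (t-1+s) - Real.log (t-1) := by
    rw [← Real.log_div (by positivity) (by positivity)]
    congr 1
    field_simp
  have h1 : s - 2 ≤ (t-1) * (1 - (1 + s/(t-1))⁻¹) := by
    have hden : (0:ℝ) < t - 1 + s := by linarith
    have heq : (t-1) * (1 - (1 + s/(t-1))⁻¹) = s*(t-1)/(t-1+s) := by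
      field_simp
      ring
    rw [heq, le_div_iff₀ hden]
    nlinarith
  calc s - 2 ≤ (t-1) * (1 - (1 + s/(t-1))⁻¹) := h1
    _ ≤ (t-1) * Real.log (1 + s/(t-1)) :=
        mul_le_mul_of_nonneg_left hlog (by linarith)
    _ = (t-1) * (Real.log (t-1+s) - Real.log (t-1)) := by rw [hls]

lemma gamma_lb (ht : 2 ≤ t) :
    Real.sqrt t * ((t-1) ^ (t-1) * Real.exp (-(t-1)) / Real.exp 2) ≤ Real.Gamma t := by
  set s := Real.sqrt t with hsdef
  have hs1 : 1 ≤ s := by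
    rw [hsdef, show (1:ℝ) = Real.sqrt 1 by simp]
    exact Real.sqrt_le_sqrt (by linarith)
  have ht1 : (1:ℝ) ≤ t - 1 := by linarith
  set C : ℝ := (t-1) ^ (t-1) * Real.exp (-(t-1)) / Real.exp 2 with hC
  have hCexp : C = Real.exp ((t-1) * Real.log (t-1) - (t-1) - 2) := by
    rw [hC, Real.rpow_def_of_pos (by linarith), ← Real.exp_add, ← Real.exp_sub]
    congr 1
    ring
  -- pointwise bound on the interval, via antitonicity right of the mode
  have hq : ∀ x : ℝ, q 1 t x = Real.exp (-x) * x ^ (t-1) := by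
    intro x
    rw [q, neg_one_mul, mul_comm]
  have hanti : AntitoneOn (q 1 t) (Set.Ici (t-1)) := by
    have := q_antitoneOn (θ := 1) one_pos (by linarith : 1 < t)
    rwa [div_one] at this
  have hkey := key_log ht
  have hright : C ≤ q 1 t (t-1+s) := by
    rw [hq, hCexp, Real.rpow_def_of_pos (by linarith : (0:ℝ) < t-1+s), ← Real.exp_add,
      Real.exp_le_exp]
    nlinarith [hkey]
  have hpt : ∀ x ∈ Set.Ioc (t-1) (t-1+s), C ≤ Real.exp (-x) * x ^ (t-1) := by
    intro x hx
    rw [← hq]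
    exact hright.trans (hanti (Set.mem_Ici.2 hx.1.le) (Set.mem_Ici.2 (by linarith)) hx.2)
  have hs0 : 0 < s := by linarith
  have hmeas : MeasurableSet (Set.Ioc (t-1) (t-1+s)) := measurableSet_Ioc
  have hint : IntegrableOn (fun x => Real.exp (-x) * x ^ (t-1)) (Set.Ioi (0:ℝ)) :=
    Real.GammaIntegral_convergent (by linarith : (0:ℝ) < t)
  have hintIoc : IntegrableOn (fun x => Real.exp (-x) * x ^ (t-1)) (Set.Ioc (t-1) (t-1+s)) :=
    hint.mono_set (fun x hx => by simp only [Set.mem_Ioi]; have := hx.1; simp at *; linarith)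
  have hlb : C * (volume (Set.Ioc (t-1) (t-1+s))).toReal
      ≤ ∫ x in Set.Ioc (t-1) (t-1+s), Real.exp (-x) * x ^ (t-1) :=
    setIntegral_ge_of_const_le_real hmeas (by simp) hpt hintIoc
  have hvol : (volume (Set.Ioc (t-1) (t-1+s))).toReal = s := by
    rw [Real.volume_Ioc, ENNReal.toReal_ofReal (by linarith)]
    ring
  have hsub : ∫ x in Set.Ioc (t-1) (t-1+s), Real.exp (-x) * x ^ (t-1)
      ≤ ∫ x in Set.Ioi (0:ℝ), Real.exp (-x) * x ^ (t-1) := by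
    apply setIntegral_mono_set hint
    · filter_upwards [self_mem_ae_restrict (measurableSet_Ioi : MeasurableSet (Set.Ioi (0:ℝ)))]
        with x hx
      exact mul_nonneg (Real.exp_pos _).le (Real.rpow_nonneg (le_of_lt hx) _)
    · exact Filter.Eventually.of_forall
        (fun x (hx : x ∈ Set.Ioc (t-1) (t-1+s)) =>
          Set.mem_Ioi.2 (lt_of_lt_of_le (by linarith : (0:ℝ) < t - 1) hx.1.le))
  rw [Real.Gamma_eq_integral (by linarith : (0:ℝ) < t)]
  calc s * C = C * s := mul_comm _ _
    _ = C * (volume (Set.Ioc (t-1) (t-1+s))).toReal := by rw [hvol]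
    _ ≤ _ := hlb
    _ ≤ _ := hsub



/-- index of the interval containing the mode -/
noncomputable def KK (θ t : ℝ) : ℕ := ⌊((t-1)/θ) / (2*π)⌋₊

/-- oscillation bound on the k-th interval -/
noncomputable def ee (θ t : ℝ) (k : ℕ) : ℝ :=
  |q θ t (2*π*((k:ℝ)+1)) - q θ t (2*π*(k:ℝ))| +
    (if k = KK θ t then q θ t ((t-1)/θ) else 0)

lemma ee_nonneg (hθ : 0 < θ) (ht : 2 ≤ t) (k : ℕ) : 0 ≤ ee θ t k := by
  unfold ee
  have h1 : (0:ℝ) ≤ q θ t ((t-1)/θ) := q_nonneg (le_of_lt (div_pos (by linarith) hθ))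
  split_ifs
  · exact add_nonneg (abs_nonneg _) h1
  · simpa using abs_nonneg _

lemma KK_le (hθ : 0 < θ) (ht : 2 ≤ t) : 2*π*(KK θ t : ℝ) ≤ (t-1)/θ := by
  have hπ := Real.pi_pos
  have h := Nat.floor_le (show (0:ℝ) ≤ ((t-1)/θ) / (2*π) by
    have h2 : (0:ℝ) < t - 1 := by linarith
    positivity)
  rw [le_div_iff₀ (by positivity)] at h
  unfold KK
  linarith

lemma KK_gt (hθ : 0 < θ) (ht : 2 ≤ t) : (t-1)/θ < 2*π*((KK θ t : ℝ)+1) := by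
  have hπ := Real.pi_pos
  have h := Nat.lt_floor_add_one (((t-1)/θ) / (2*π))
  rw [div_lt_iff₀ (by positivity)] at h
  unfold KK
  linarith

lemma osc_bound (hθ : 0 < θ) (ht : 2 ≤ t) (k : ℕ) (u : ℝ)
    (hu : u ∈ Set.Ioc (2*π*(k:ℝ)) (2*π*((k:ℝ)+1))) :
    |q θ t u - q θ t (2*π*((k:ℝ)+1))| ≤ ee θ t k := by
  have hπ := Real.pi_pos
  have ht1 : 1 < t := by linarith
  set m := (t-1)/θ with hmdef
  have hm : 0 < m := div_pos (by linarith) hθ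
  have hk0 : (0:ℝ) ≤ 2*π*(k:ℝ) := by positivity
  have hu1 : 2*π*(k:ℝ) < u := hu.1
  have hu2 : u ≤ 2*π*((k:ℝ)+1) := hu.2
  have hqmax := q_le_max (x := u) hθ ht1 (by linarith)
  have hbmax := q_le_max (x := 2*π*((k:ℝ)+1)) hθ ht1 (by positivity)
  have hqu0 : 0 ≤ q θ t u := q_nonneg (by linarith)
  have hqb0 : 0 ≤ q θ t (2*π*((k:ℝ)+1)) := q_nonneg (by positivity)
  rcases lt_trichotomy k (KK θ t) with hk | hk | hk
  · -- monotone region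
    have hkK : (k:ℝ) + 1 ≤ (KK θ t : ℝ) := by exact_mod_cast Nat.succ_le_of_lt hk
    have hble : 2*π*((k:ℝ)+1) ≤ m := le_trans (by nlinarith) (KK_le hθ ht)
    have hmono := q_monotoneOn hθ ht1
    have h1 : q θ t u ≤ q θ t (2*π*((k:ℝ)+1)) :=
      hmono ⟨by linarith, by linarith⟩ ⟨by positivity, hble⟩ hu2
    have h2 : q θ t (2*π*(k:ℝ)) ≤ q θ t u :=
      hmono ⟨by positivity, by linarith⟩ ⟨by linarith, by linarith⟩ hu1.le
    rw [abs_sub_comm, abs_of_nonneg (by linarith)]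
    unfold ee
    have : |q θ t (2*π*((k:ℝ)+1)) - q θ t (2*π*(k:ℝ))| =
        q θ t (2*π*((k:ℝ)+1)) - q θ t (2*π*(k:ℝ)) := abs_of_nonneg (by linarith)
    rw [this]
    split_ifs with h
    · have : (0:ℝ) ≤ q θ t m := q_nonneg hm.le
      linarith
    · linarith
  · -- interval containing the mode
    have hqm0 : 0 ≤ q θ t m := q_nonneg hm.le
    unfold ee
    rw [if_pos hk]
    have habs : |q θ t u - q θ t (2*π*((k:ℝ)+1))| ≤ q θ t m := by
      rw [abs_sub_le_iff]
      constructor <;> linarith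
    have : (0:ℝ) ≤ |q θ t (2*π*((k:ℝ)+1)) - q θ t (2*π*(k:ℝ))| := abs_nonneg _
    linarith
  · -- antitone region
    have hkK : (KK θ t : ℝ) + 1 ≤ (k:ℝ) := by exact_mod_cast Nat.succ_le_of_lt hk
    have hage : m < 2*π*(k:ℝ) := lt_of_lt_of_le (KK_gt hθ ht) (by nlinarith)
    have hanti := q_antitoneOn hθ ht1
    have h1 : q θ t (2*π*((k:ℝ)+1)) ≤ q θ t u :=
      hanti (Set.mem_Ici.2 (by linarith)) (Set.mem_Ici.2 (by linarith)) hu2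
    have h2 : q θ t u ≤ q θ t (2*π*(k:ℝ)) :=
      hanti (Set.mem_Ici.2 hage.le) (Set.mem_Ici.2 (by linarith)) hu1.le
    rw [abs_of_nonneg (by linarith)]
    unfold ee
    have : |q θ t (2*π*((k:ℝ)+1)) - q θ t (2*π*(k:ℝ))| =
        q θ t (2*π*(k:ℝ)) - q θ t (2*π*((k:ℝ)+1)) := by
      rw [abs_sub_comm]
      exact abs_of_nonneg (by linarith)
    rw [this]
    split_ifs with h
    · have : (0:ℝ) ≤ q θ t m := q_nonneg hm.le
      linarith
    · linarith

lemma ee_sum_le (hθ : 0 < θ) (ht : 2 ≤ t) (n : ℕ) :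
    ∑ k ∈ Finset.range n, ee θ t k ≤ 6 * q θ t ((t-1)/θ) := by
  have hπ := Real.pi_pos
  have ht1 : 1 < t := by linarith
  set m := (t-1)/θ with hmdef
  have hm : 0 < m := div_pos (by linarith) hθ
  have hqm0 : 0 ≤ q θ t m := q_nonneg hm.le
  set g : ℕ → ℝ := fun k => q θ t (2*π*(k:ℝ)) with hgdef
  set h : ℕ → ℝ := fun k => q θ t (2*π*((max k (KK θ t + 1) : ℕ):ℝ)) with hhdef
  have hg0 : g 0 = 0 := by
    simp only [hgdef, Nat.cast_zero, mul_zero]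
    exact q_zero ht1
  have hgmax : ∀ k : ℕ, g k ≤ q θ t m := fun k => q_le_max hθ ht1 (by positivity)
  have hh0 : h 0 ≤ q θ t m := q_le_max hθ ht1 (by positivity)
  have hhn : ∀ k : ℕ, 0 ≤ h k := fun k => q_nonneg (by positivity)
  -- pointwise bound on |Δ k|
  have hstep : ∀ k : ℕ, ee θ t k ≤
      (g (k+1) - g k) + 2*(h k - h (k+1)) + 3*(if k = KK θ t then q θ t m else 0) := by
    intro k
    have hcast : ((k+1 : ℕ):ℝ) = (k:ℝ) + 1 := by push_cast; ring
    have heq : ee θ t k = |g (k+1) - g k| + (if k = KK θ t then q θ t m else 0) := by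
      unfold ee
      rw [hgdef]
      simp only [hcast]
      rfl
    rw [heq]
    rcases lt_trichotomy k (KK θ t) with hk | hk | hk
    · -- Δ ≥ 0, h k = h (k+1)
      have hkK : (k:ℝ) + 1 ≤ (KK θ t : ℝ) := by exact_mod_cast Nat.succ_le_of_lt hk
      have hble : 2*π*((k:ℝ)+1) ≤ m := le_trans (by nlinarith) (KK_le hθ ht)
      have hmono := q_monotoneOn hθ ht1
      have hΔ : g k ≤ g (k+1) := by
        rw [hgdef]
        simp only [hcast]
        exact hmono ⟨by positivity, by linarith [hble]⟩ ⟨by positivity, hble⟩ (by nlinarith)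
      have hheq : h k = h (k+1) := by
        have e1 : k ⊔ (KK θ t + 1) = KK θ t + 1 := max_eq_right (le_trans hk.le (Nat.le_succ _))
        have e2 : (k+1) ⊔ (KK θ t + 1) = KK θ t + 1 := max_eq_right (Nat.succ_le_succ hk.le)
        rw [hhdef]
        simp only [e1, e2]
      rw [abs_of_nonneg (by linarith), hheq]
      split_ifs with hif
      · linarith
      · linarith
    · -- k = KK: |Δ| ≤ q m, h k = h (k+1)
      have hΔle : |g (k+1) - g k| ≤ q θ t m := by
        rw [abs_sub_le_iff]
        have h1 := hgmax (k+1)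
        have h2 := hgmax k
        have h3 : 0 ≤ g (k+1) := q_nonneg (by positivity)
        have h4 : 0 ≤ g k := q_nonneg (by positivity)
        constructor <;> linarith
      have hheq : h k = h (k+1) := by
        have e1 : k ⊔ (KK θ t + 1) = KK θ t + 1 := max_eq_right (hk ▸ Nat.le_succ _)
        have e2 : (k+1) ⊔ (KK θ t + 1) = KK θ t + 1 := max_eq_right (by omega)
        rw [hhdef]
        simp only [e1, e2]
      rw [if_pos hk, hheq]
      linarith [hΔle, neg_abs_le (g (k+1) - g k)]
    · -- antitone region: |Δ| = -Δ = h k - h (k+1)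
      have hkK : (KK θ t : ℝ) + 1 ≤ (k:ℝ) := by exact_mod_cast Nat.succ_le_of_lt hk
      have hage : m ≤ 2*π*(k:ℝ) := (lt_of_lt_of_le (KK_gt hθ ht) (by nlinarith)).le
      have hanti := q_antitoneOn hθ ht1
      have hΔ : g (k+1) ≤ g k := by
        rw [hgdef]
        simp only [hcast]
        exact hanti (Set.mem_Ici.2 hage) (Set.mem_Ici.2 (by linarith)) (by nlinarith)
      have hh1 : h k = g k := by
        have e1 : k ⊔ (KK θ t + 1) = k := max_eq_left (Nat.succ_le_of_lt hk)
        rw [hhdef, hgdef]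
        simp only [e1]
      have hh2 : h (k+1) = g (k+1) := by
        have e2 : (k+1) ⊔ (KK θ t + 1) = k+1 := max_eq_left (by omega)
        rw [hhdef, hgdef]
        simp only [e2]
      rw [abs_of_nonpos (by linarith), hh1, hh2]
      split_ifs with hif
      · linarith
      · linarith
  calc ∑ k ∈ Finset.range n, ee θ t k
      ≤ ∑ k ∈ Finset.range n, ((g (k+1) - g k) + 2*(h k - h (k+1))
          + 3*(if k = KK θ t then q θ t m else 0)) :=
        Finset.sum_le_sum (fun k _ => hstep k)
    _ = (∑ k ∈ Finset.range n, (g (k+1) - g k))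
        + 2*(∑ k ∈ Finset.range n, (h k - h (k+1)))
        + 3*(∑ k ∈ Finset.range n, (if k = KK θ t then q θ t m else 0)) := by
        rw [Finset.sum_add_distrib, Finset.sum_add_distrib, Finset.mul_sum, Finset.mul_sum]
    _ = (g n - g 0) + 2*(h 0 - h n)
        + 3*(∑ k ∈ Finset.range n, (if k = KK θ t then q θ t m else 0)) := by
        rw [Finset.sum_range_sub g, Finset.sum_range_sub' h]
    _ ≤ 6 * q θ t m := by
        have hite : (∑ k ∈ Finset.range n, (if k = KK θ t then q θ t m else 0)) ≤ q θ t m := by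
          rw [Finset.sum_ite_eq' (Finset.range n) (KK θ t) (fun _ => q θ t m)]
          split_ifs
          · exact le_refl _
          · exact hqm0
        linarith [hgmax n, hh0, hhn n, hg0, hite]


lemma q_measurable (ht : 2 ≤ t) : Measurable (q θ t) := by
  unfold q
  exact ((Real.continuous_rpow_const (by linarith)).measurable).mul
    (Real.continuous_exp.measurable.comp (measurable_const.mul measurable_id))

lemma q_integrableOn (hθ : 0 < θ) (ht : 2 ≤ t) :
    IntegrableOn (q θ t) (Set.Ioi (0:ℝ)) := by
  have := integrableOn_rpow_mul_exp_neg_mul_rpow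
    (show (-1:ℝ) < t-1 by linarith) one_pos hθ
  simp only [Real.rpow_one] at this
  exact this

lemma key_estimate (hθ : 0 < θ) (ht : 2 ≤ t) (F : ℝ → ℂ) (hF : Measurable F)
    (M' : ℝ) (hM' : ∀ x, ‖F x‖ ≤ M')
    (hper : ∀ x, F (x + 2*π) = F x)
    (hzero : (∫ y in (0:ℝ)..(2*π), F y) = 0) :
    ‖∫ x in Set.Ioi (0:ℝ), F x * ((θ^t / Real.Gamma t * q θ t x : ℝ) : ℂ)‖ ≤
      2*π * M' * (θ^t / Real.Gamma t) * (6 * q θ t ((t-1)/θ)) := by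
  have hπ := Real.pi_pos
  have ht1 : 1 < t := by linarith
  have hM'0 : 0 ≤ M' := le_trans (norm_nonneg _) (hM' 0)
  set c := θ^t / Real.Gamma t with hcdef
  have hΓ : 0 < Real.Gamma t := Real.Gamma_pos_of_pos (by linarith)
  have hc : 0 < c := by
    rw [hcdef]; positivity
  set m := (t-1)/θ with hmdef
  have hm : 0 < m := div_pos (by linarith) hθ
  have hqm0 : 0 ≤ q θ t m := q_nonneg hm.le
  have hqmeas : Measurable (q θ t) := q_measurable ht
  have hqint : IntegrableOn (q θ t) (Set.Ioi (0:ℝ)) := q_integrableOn hθ ht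
  -- integrability of the full integrand
  have hPaesm : AEStronglyMeasurable (fun x => F x * ((c * q θ t x : ℝ) : ℂ))
      (volume.restrict (Set.Ioi (0:ℝ))) :=
    (hF.mul (Complex.measurable_ofReal.comp (measurable_const.mul hqmeas))).aestronglyMeasurable
  have hPint : IntegrableOn (fun x => F x * ((c * q θ t x : ℝ) : ℂ)) (Set.Ioi (0:ℝ)) := by
    apply Integrable.mono' ((hqint.const_mul c).const_mul M') hPaesm
    filter_upwards [self_mem_ae_restrict (measurableSet_Ioi : MeasurableSet (Set.Ioi (0:ℝ)))]
      with x hx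
    rw [norm_mul, Complex.norm_real, Real.norm_eq_abs]
    have hq0 : 0 ≤ q θ t x := q_nonneg (le_of_lt hx)
    rw [abs_of_nonneg (by positivity : (0:ℝ) ≤ c * q θ t x)]
    exact mul_le_mul_of_nonneg_right (hM' x) (by positivity)
  -- the decomposition of (0,∞) into the intervals
  have hUnion : Set.Ioi (0:ℝ) = ⋃ k : ℕ, Set.Ioc (2*π*(k:ℝ)) (2*π*((k:ℝ)+1)) := by
    ext x
    simp only [Set.mem_Ioi, Set.mem_iUnion, Set.mem_Ioc]
    constructor
    · intro hx
      have ha : 0 < x / (2*π) := by positivity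
      have hn1 : 1 ≤ ⌈x / (2*π)⌉₊ := Nat.one_le_ceil_iff.2 ha
      refine ⟨⌈x / (2*π)⌉₊ - 1, ?_, ?_⟩
      · have h2 : (↑(⌈x / (2*π)⌉₊ - 1) : ℝ) = (⌈x / (2*π)⌉₊ : ℝ) - 1 := by
          push_cast [Nat.cast_sub hn1]; ring
        have h3 : (⌈x / (2*π)⌉₊ : ℝ) < x / (2*π) + 1 := Nat.ceil_lt_add_one ha.le
        rw [h2]
        have h4 : ((⌈x / (2*π)⌉₊ : ℝ) - 1) * (2*π) < x :=
          (lt_div_iff₀ (by positivity : (0:ℝ) < 2*π)).1 (by linarith)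
        nlinarith
      · have h2 : (↑(⌈x / (2*π)⌉₊ - 1) : ℝ) + 1 = (⌈x / (2*π)⌉₊ : ℝ) := by
          push_cast [Nat.cast_sub hn1]; ring
        rw [h2]
        have h4 : x ≤ (⌈x / (2*π)⌉₊ : ℝ) * (2*π) :=
          (div_le_iff₀ (by positivity : (0:ℝ) < 2*π)).1 (Nat.le_ceil _)
        nlinarith
    · rintro ⟨k, hk1, -⟩
      have : (0:ℝ) ≤ 2*π*(k:ℝ) := by positivity
      linarith
  have hdisj : Pairwise (Function.onFun Disjoint
      (fun k : ℕ => Set.Ioc (2*π*(k:ℝ)) (2*π*((k:ℝ)+1)))) := by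
    intro i j hij
    rw [Function.onFun, Set.Ioc_disjoint_Ioc]
    rcases lt_or_gt_of_ne hij with h | h
    · have : (i:ℝ) + 1 ≤ (j:ℝ) := by exact_mod_cast Nat.succ_le_of_lt h
      exact min_le_of_left_le (le_max_of_le_right (by nlinarith))
    · have : (j:ℝ) + 1 ≤ (i:ℝ) := by exact_mod_cast Nat.succ_le_of_lt h
      exact min_le_of_right_le (le_max_of_le_left (by nlinarith))
  have hHasSum : HasSum
      (fun k : ℕ => ∫ x in Set.Ioc (2*π*(k:ℝ)) (2*π*((k:ℝ)+1)), F x * ((c * q θ t x : ℝ) : ℂ))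
      (∫ x in Set.Ioi (0:ℝ), F x * ((c * q θ t x : ℝ) : ℂ)) := by
    rw [hUnion] at hPint ⊢
    exact hasSum_integral_iUnion (fun k => measurableSet_Ioc) hdisj hPint
  -- rewrite each term as an integral over (0, 2π]
  have hperk : ∀ (k : ℕ) (y : ℝ), F (y + 2*π*(k:ℝ)) = F y := by
    intro k y
    have hper' : Function.Periodic F (2*π) := hper
    have := (hper'.nat_mul k) y
    rwa [show (k:ℝ) * (2*π) = 2*π*(k:ℝ) by ring] at this
  have hterm : ∀ k : ℕ,
      (∫ x in Set.Ioc (2*π*(k:ℝ)) (2*π*((k:ℝ)+1)), F x * ((c * q θ t x : ℝ) : ℂ)) =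
      ∫ y in (0:ℝ)..(2*π), F y * ((c * q θ t (y + 2*π*(k:ℝ)) : ℝ) : ℂ) := by
    intro k
    have hle : 2*π*(k:ℝ) ≤ 2*π*((k:ℝ)+1) := by nlinarith
    rw [← intervalIntegral.integral_of_le hle]
    have := intervalIntegral.integral_comp_add_right (a := (0:ℝ)) (b := 2*π)
      (fun x => F x * ((c * q θ t x : ℝ) : ℂ)) (2*π*(k:ℝ))
    rw [zero_add, show 2*π + 2*π*(k:ℝ) = 2*π*((k:ℝ)+1) by ring] at this
    rw [← this]
    apply intervalIntegral.integral_congr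
    intro y _
    simp only [hperk k y]
  -- integrability on [0, 2π] of the relevant functions
  have hIint : ∀ k : ℕ, IntervalIntegrable
      (fun y => F y * ((c * q θ t (y + 2*π*(k:ℝ)) : ℝ) : ℂ)) volume 0 (2*π) := by
    intro k
    rw [intervalIntegrable_iff_integrableOn_Ioc_of_le (by positivity)]
    apply Integrable.mono' (integrableOn_const (C := M' * (c * q θ t m)) (by
      rw [Real.volume_Ioc]; exact ENNReal.ofReal_ne_top))
    · exact (hF.mul (Complex.measurable_ofReal.comp
        ((measurable_const.mul (hqmeas.comp (measurable_add_const _)))))).aestronglyMeasurable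
    · filter_upwards [self_mem_ae_restrict (measurableSet_Ioc :
        MeasurableSet (Set.Ioc (0:ℝ) (2*π)))] with y hy
      rw [norm_mul, Complex.norm_real, Real.norm_eq_abs]
      have hy0 : (0:ℝ) ≤ y + 2*π*(k:ℝ) := by
        have : (0:ℝ) ≤ 2*π*(k:ℝ) := by positivity
        have := hy.1
        linarith
      have hq0 : 0 ≤ q θ t (y + 2*π*(k:ℝ)) := q_nonneg hy0
      have hqle : q θ t (y + 2*π*(k:ℝ)) ≤ q θ t m := q_le_max hθ ht1 hy0
      rw [abs_of_nonneg (by positivity)]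
      calc ‖F y‖ * (c * q θ t (y + 2*π*(k:ℝ))) ≤ M' * (c * q θ t m) := by
            apply mul_le_mul (hM' y) (by nlinarith) (by positivity) hM'0
        _ = M' * (c * q θ t m) := rfl
  have hFint : IntervalIntegrable F volume 0 (2*π) := by
    rw [intervalIntegrable_iff_integrableOn_Ioc_of_le (by positivity)]
    apply Integrable.mono' (integrableOn_const (C := M') (by
      rw [Real.volume_Ioc]; exact ENNReal.ofReal_ne_top))
    · exact hF.aestronglyMeasurable
    · exact Filter.Eventually.of_forall (fun y => hM' y)
  -- subtract the right-endpoint constant (using mean zero)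
  have hterm2 : ∀ k : ℕ,
      (∫ y in (0:ℝ)..(2*π), F y * ((c * q θ t (y + 2*π*(k:ℝ)) : ℝ) : ℂ)) =
      ∫ y in (0:ℝ)..(2*π), F y *
        (((c * q θ t (y + 2*π*(k:ℝ)) : ℝ) : ℂ) - ((c * q θ t (2*π*((k:ℝ)+1)) : ℝ) : ℂ)) := by
    intro k
    have h2 : IntervalIntegrable
        (fun y => F y * ((c * q θ t (2*π*((k:ℝ)+1)) : ℝ) : ℂ)) volume 0 (2*π) :=
      hFint.mul_const _
    rw [eq_comm]
    have : (fun y => F y *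
        (((c * q θ t (y + 2*π*(k:ℝ)) : ℝ) : ℂ) - ((c * q θ t (2*π*((k:ℝ)+1)) : ℝ) : ℂ))) =
        (fun y => F y * ((c * q θ t (y + 2*π*(k:ℝ)) : ℝ) : ℂ) -
          F y * ((c * q θ t (2*π*((k:ℝ)+1)) : ℝ) : ℂ)) := by
      funext y; ring
    rw [this, intervalIntegral.integral_sub (hIint k) h2,
      intervalIntegral.integral_mul_const, hzero, zero_mul, sub_zero]
  -- bound each term
  have hbound : ∀ k : ℕ,
      ‖∫ y in (0:ℝ)..(2*π), F y * ((c * q θ t (y + 2*π*(k:ℝ)) : ℝ) : ℂ)‖ ≤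
        (M' * (c * ee θ t k)) * (2*π) := by
    intro k
    rw [hterm2 k]
    have h := intervalIntegral.norm_integral_le_of_norm_le_const
      (C := M' * (c * ee θ t k))
      (f := fun y => F y *
        (((c * q θ t (y + 2*π*(k:ℝ)) : ℝ) : ℂ) - ((c * q θ t (2*π*((k:ℝ)+1)) : ℝ) : ℂ)))
      (a := 0) (b := 2*π) ?_
    · rw [abs_of_nonneg (by have := Real.pi_pos; linarith : (0:ℝ) ≤ 2*π - 0)] at h
      calc _ ≤ (M' * (c * ee θ t k)) * (2*π - 0) := h
        _ = (M' * (c * ee θ t k)) * (2*π) := by ring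
    · intro y hy
      rw [Set.uIoc_of_le (by positivity : (0:ℝ) ≤ 2*π)] at hy
      have hy0 : (0:ℝ) < y := hy.1
      have hu : y + 2*π*(k:ℝ) ∈ Set.Ioc (2*π*(k:ℝ)) (2*π*((k:ℝ)+1)) := by
        constructor
        · linarith
        · have := hy.2; nlinarith
      have hosc := osc_bound hθ ht k (y + 2*π*(k:ℝ)) hu
      rw [norm_mul]
      have : (((c * q θ t (y + 2*π*(k:ℝ)) : ℝ) : ℂ) - ((c * q θ t (2*π*((k:ℝ)+1)) : ℝ) : ℂ)) =
          (((c * q θ t (y + 2*π*(k:ℝ)) - c * q θ t (2*π*((k:ℝ)+1)) : ℝ)) : ℂ) := by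
        push_cast; ring
      rw [this, Complex.norm_real, Real.norm_eq_abs]
      have heq : |c * q θ t (y + 2*π*(k:ℝ)) - c * q θ t (2*π*((k:ℝ)+1))| =
          c * |q θ t (y + 2*π*(k:ℝ)) - q θ t (2*π*((k:ℝ)+1))| := by
        rw [show c * q θ t (y + 2*π*(k:ℝ)) - c * q θ t (2*π*((k:ℝ)+1)) =
          c * (q θ t (y + 2*π*(k:ℝ)) - q θ t (2*π*((k:ℝ)+1))) from by ring,
          abs_mul, abs_of_pos hc]
      rw [heq]
      exact mul_le_mul (hM' y) (mul_le_mul_of_nonneg_left hosc hc.le)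
        (by positivity) hM'0
  -- summability of the bounding sequence
  have hee_sum : Summable (ee θ t) :=
    summable_of_sum_range_le (fun k => ee_nonneg hθ ht k) (fun n => ee_sum_le hθ ht n)
  have hee_tsum : ∑' k, ee θ t k ≤ 6 * q θ t m :=
    tsum_le_of_sum_range_le (fun k => ee_nonneg hθ ht k) (fun n => ee_sum_le hθ ht n)
  have hbd_fun : (fun k : ℕ => (M' * (c * ee θ t k)) * (2*π)) =
      (fun k : ℕ => (M' * c * (2*π)) * ee θ t k) := by
    funext k; ring
  have hbd_sum : Summable (fun k : ℕ => (M' * (c * ee θ t k)) * (2*π)) := by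
    rw [hbd_fun]; exact hee_sum.mul_left _
  -- conclude
  have hnorm_sum : Summable (fun k : ℕ =>
      ‖∫ y in (0:ℝ)..(2*π), F y * ((c * q θ t (y + 2*π*(k:ℝ)) : ℝ) : ℂ)‖) :=
    Summable.of_nonneg_of_le (fun k => norm_nonneg _) hbound hbd_sum
  have hS : (∫ x in Set.Ioi (0:ℝ), F x * ((c * q θ t x : ℝ) : ℂ)) =
      ∑' k : ℕ, ∫ y in (0:ℝ)..(2*π), F y * ((c * q θ t (y + 2*π*(k:ℝ)) : ℝ) : ℂ) := by
    rw [← hHasSum.tsum_eq]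
    exact tsum_congr hterm
  calc ‖∫ x in Set.Ioi (0:ℝ), F x * ((c * q θ t x : ℝ) : ℂ)‖
      = ‖∑' k : ℕ, ∫ y in (0:ℝ)..(2*π), F y * ((c * q θ t (y + 2*π*(k:ℝ)) : ℝ) : ℂ)‖ := by
        rw [hS]
    _ ≤ ∑' k : ℕ, ‖∫ y in (0:ℝ)..(2*π), F y * ((c * q θ t (y + 2*π*(k:ℝ)) : ℝ) : ℂ)‖ :=
        norm_tsum_le_tsum_norm hnorm_sum
    _ ≤ ∑' k : ℕ, (M' * (c * ee θ t k)) * (2*π) := Summable.tsum_le_tsum hbound hnorm_sum hbd_sum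
    _ = (M' * c * (2*π)) * ∑' k, ee θ t k := by
        rw [hbd_fun, tsum_mul_left]
    _ ≤ (M' * c * (2*π)) * (6 * q θ t m) := by
        apply mul_le_mul_of_nonneg_left hee_tsum (by positivity)
    _ = 2*π * M' * c * (6 * q θ t m) := by ring



lemma cq_bound (hθ : 0 < θ) (ht : 2 ≤ t) :
    θ^t / Real.Gamma t * q θ t ((t-1)/θ) ≤ θ * Real.exp 2 / Real.sqrt t := by
  have hΓ : 0 < Real.Gamma t := Real.Gamma_pos_of_pos (by linarith)
  have ht1 : (0:ℝ) < t - 1 := by linarith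
  have hs : 0 < Real.sqrt t := Real.sqrt_pos.2 (by linarith)
  set X : ℝ := (t-1) ^ (t-1) * Real.exp (-(t-1)) with hX
  have hX0 : 0 < X := by
    rw [hX]
    have : (0:ℝ) < (t-1) ^ (t-1) := Real.rpow_pos_of_pos ht1 _
    positivity
  have hqm : q θ t ((t-1)/θ) = X / θ^(t-1) := by
    rw [q, Real.div_rpow ht1.le hθ.le, hX]
    rw [show -θ * ((t-1)/θ) = -(t-1) from by field_simp]
    ring
  have hpow : θ^t = θ * θ^(t-1) := by
    have h := Real.rpow_add hθ 1 (t-1)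
    rw [show (1:ℝ)+(t-1) = t from by ring, Real.rpow_one] at h
    exact h
  have hLHS : θ^t / Real.Gamma t * q θ t ((t-1)/θ) = θ * X / Real.Gamma t := by
    have hθt : (0:ℝ) < θ^(t-1) := Real.rpow_pos_of_pos hθ _
    rw [hqm, hpow]
    field_simp
  rw [hLHS]
  have hlb := gamma_lb ht
  rw [div_le_div_iff₀ hΓ hs]
  have h3 := mul_le_mul_of_nonneg_left hlb (show (0:ℝ) ≤ θ * Real.exp 2 by positivity)
  have h4 : θ * Real.exp 2 * (Real.sqrt t * (X / Real.exp 2)) =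
      θ * X * Real.sqrt t := by
    field_simp
  rw [hX] at h4 ⊢
  calc θ * ((t-1) ^ (t-1) * Real.exp (-(t-1))) * Real.sqrt t
      = θ * Real.exp 2 * (Real.sqrt t * (((t-1) ^ (t-1) * Real.exp (-(t-1))) / Real.exp 2)) := by
        rw [h4]
    _ ≤ θ * Real.exp 2 * Real.Gamma t := h3

lemma integral_p (hθ : 0 < θ) (ht : 0 < t) :
    ∫ x in Set.Ioi (0:ℝ), (θ^t / Real.Gamma t) * q θ t x = 1 := by
  have hΓ : 0 < Real.Gamma t := Real.Gamma_pos_of_pos ht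
  have h1 : ∫ x in Set.Ioi (0:ℝ), q θ t x = (1/θ)^t * Real.Gamma t := by
    rw [show (q θ t) = fun x : ℝ => x ^ (t-1) * Real.exp (-(θ * x)) from by
      funext x; rw [q, neg_mul]]
    exact Real.integral_rpow_mul_exp_neg_mul_Ioi ht hθ
  rw [MeasureTheory.integral_const_mul, h1]
  have h2 : (1/θ:ℝ)^t * θ^t = 1 := by
    rw [← Real.mul_rpow (by positivity) hθ.le, one_div_mul_cancel hθ.ne', Real.one_rpow]
  calc θ^t / Real.Gamma t * ((1/θ)^t * Real.Gamma t)
      = ((1/θ)^t * θ^t) * (Real.Gamma t / Real.Gamma t) := by ring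
    _ = 1 := by rw [div_self hΓ.ne', h2, mul_one]



end GammaModAux

open GammaModAux in
/-- The Gamma(t, θ) law taken modulo 2π converges to the uniform law on
`[0, 2π)` as the shape parameter `t → ∞`: for every bounded measurable
2π-periodic `f : ℝ → ℂ`, the Gamma averages of `f` converge to the uniform
average of `f` over one period. -/
theorem gamma_mod_two_pi_tendsto_uniform (θ : ℝ) (hθ : 0 < θ) (f : ℝ → ℂ)
    (hf_meas : Measurable f) (hf_bdd : ∃ M : ℝ, ∀ x : ℝ, ‖f x‖ ≤ M)
    (hf_per : ∀ x : ℝ, f (x + 2 * Real.pi) = f x) :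
    Tendsto
      (fun t : ℝ => ∫ x in Set.Ioi (0 : ℝ),
        f x * ((θ ^ t / Real.Gamma t * (x ^ (t - 1) * Real.exp (-θ * x)) : ℝ) : ℂ))
      atTop
      (nhds (((1 / (2 * Real.pi) : ℝ) : ℂ) *
        ∫ y in (0 : ℝ)..(2 * Real.pi), f y)) := by
  obtain ⟨M, hM⟩ := hf_bdd
  have hπ := Real.pi_pos
  set A : ℂ := ((1 / (2 * Real.pi) : ℝ) : ℂ) * ∫ y in (0:ℝ)..(2*Real.pi), f y with hA
  set F : ℝ → ℂ := fun x => f x - A with hFdef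
  have hFmeas : Measurable F := hf_meas.sub measurable_const
  set M' : ℝ := M + ‖A‖ with hM'def
  have hFbdd : ∀ x, ‖F x‖ ≤ M' :=
    fun x => (norm_sub_le _ _).trans (add_le_add_left (hM x) _)
  have hFper : ∀ x, F (x + 2*π) = F x := fun x => by
    simp only [hFdef, hf_per x]
  have hfint : IntervalIntegrable f volume 0 (2*π) := by
    rw [intervalIntegrable_iff_integrableOn_Ioc_of_le (by positivity)]
    apply Integrable.mono' (integrableOn_const (C := M) (by
      rw [Real.volume_Ioc]; exact ENNReal.ofReal_ne_top))
    · exact hf_meas.aestronglyMeasurable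
    · exact Filter.Eventually.of_forall (fun y => hM y)
  have hFzero : (∫ y in (0:ℝ)..(2*π), F y) = 0 := by
    rw [hFdef]
    rw [intervalIntegral.integral_sub hfint intervalIntegrable_const,
      intervalIntegral.integral_const, sub_zero, hA]
    rw [Complex.real_smul, sub_eq_zero]
    rw [← mul_assoc]
    have : ((2*π : ℝ):ℂ) * ((1 / (2 * π) : ℝ) : ℂ) = 1 := by
      rw [← Complex.ofReal_mul]
      rw [show (2*π) * (1/(2*π)) = 1 from by field_simp]
      exact Complex.ofReal_one
    rw [this, one_mul]
  -- the quantitative eventual bound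
  set C : ℝ := 2*π * M' * (θ * Real.exp 2) * 6 with hC
  have hM'0 : 0 ≤ M' := le_trans (norm_nonneg _) (hFbdd 0)
  have hkey : ∀ t : ℝ, 2 ≤ t →
      ‖(∫ x in Set.Ioi (0 : ℝ),
          f x * ((θ ^ t / Real.Gamma t * (x ^ (t - 1) * Real.exp (-θ * x)) : ℝ) : ℂ)) - A‖ ≤
        C / Real.sqrt t := by
    intro t ht
    have ht1 : 1 < t := by linarith
    have hΓ : 0 < Real.Gamma t := Real.Gamma_pos_of_pos (by linarith)
    set c := θ^t / Real.Gamma t with hcdef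
    have hc : 0 < c := by rw [hcdef]; positivity
    have hqmeas : Measurable (q θ t) := q_measurable ht
    have hqint : IntegrableOn (q θ t) (Set.Ioi (0:ℝ)) := q_integrableOn hθ ht
    -- the integrand in the goal is exactly f x * (c * q θ t x)
    have hinteq : (fun x : ℝ =>
        f x * ((θ ^ t / Real.Gamma t * (x ^ (t - 1) * Real.exp (-θ * x)) : ℝ) : ℂ)) =
        (fun x : ℝ => f x * ((c * q θ t x : ℝ) : ℂ)) := rfl
    -- integrabilities
    have hfP : IntegrableOn (fun x => f x * ((c * q θ t x : ℝ) : ℂ)) (Set.Ioi (0:ℝ)) := by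
      apply Integrable.mono' (((hqint.const_mul c).const_mul M))
      · exact (hf_meas.mul (Complex.measurable_ofReal.comp
          (measurable_const.mul hqmeas))).aestronglyMeasurable
      · filter_upwards [self_mem_ae_restrict
          (measurableSet_Ioi : MeasurableSet (Set.Ioi (0:ℝ)))] with x hx
        rw [norm_mul, Complex.norm_real, Real.norm_eq_abs]
        have hq0 : 0 ≤ q θ t x := q_nonneg (le_of_lt hx)
        rw [abs_of_nonneg (by positivity : (0:ℝ) ≤ c * q θ t x)]
        exact mul_le_mul_of_nonneg_right (hM x) (by positivity)
    have hAP : IntegrableOn (fun x => A * ((c * q θ t x : ℝ) : ℂ)) (Set.Ioi (0:ℝ)) := by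
      apply Integrable.const_mul
      exact Integrable.ofReal (hqint.const_mul c)
    -- split the integral
    have hsplit : (∫ x in Set.Ioi (0:ℝ), F x * ((c * q θ t x : ℝ) : ℂ)) =
        (∫ x in Set.Ioi (0:ℝ), f x * ((c * q θ t x : ℝ) : ℂ)) - A := by
      have h1 : (fun x => F x * ((c * q θ t x : ℝ) : ℂ)) =
          (fun x => f x * ((c * q θ t x : ℝ) : ℂ) - A * ((c * q θ t x : ℝ) : ℂ)) := by
        funext x
        rw [hFdef]
        ring
      rw [h1, MeasureTheory.integral_sub hfP hAP, MeasureTheory.integral_const_mul]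
      congr 1
      have h2 : (∫ x in Set.Ioi (0:ℝ), ((c * q θ t x : ℝ) : ℂ)) =
          (((∫ x in Set.Ioi (0:ℝ), c * q θ t x : ℝ)) : ℂ) := integral_ofReal
      rw [h2, integral_p hθ (by linarith : (0:ℝ) < t), Complex.ofReal_one, mul_one]
    rw [hinteq, ← hsplit]
    -- apply the key estimate and the density sup bound
    have hest := key_estimate hθ ht F hFmeas M' hFbdd hFper hFzero
    have hcq := cq_bound hθ ht
    have hs : 0 < Real.sqrt t := Real.sqrt_pos.2 (by linarith)
    calc ‖∫ x in Set.Ioi (0:ℝ), F x * ((c * q θ t x : ℝ) : ℂ)‖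
        ≤ 2*π * M' * c * (6 * q θ t ((t-1)/θ)) := hest
      _ = (2*π * M' * 6) * (c * q θ t ((t-1)/θ)) := by ring
      _ ≤ (2*π * M' * 6) * (θ * Real.exp 2 / Real.sqrt t) := by
          apply mul_le_mul_of_nonneg_left hcq (by positivity)
      _ = C / Real.sqrt t := by rw [hC]; ring
  -- the bound tends to zero
  have hsqrt : Tendsto Real.sqrt atTop atTop := by
    rw [tendsto_atTop]
    intro b
    filter_upwards [eventually_ge_atTop (b^2), eventually_ge_atTop (0:ℝ)] with x hx hx0
    calc b ≤ |b| := le_abs_self b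
      _ = Real.sqrt (b^2) := (Real.sqrt_sq_eq_abs b).symm
      _ ≤ Real.sqrt x := Real.sqrt_le_sqrt hx
  have htend0 : Tendsto (fun t : ℝ => C / Real.sqrt t) atTop (nhds 0) :=
    Tendsto.div_atTop tendsto_const_nhds hsqrt
  have hmain : Tendsto
      (fun t : ℝ => (∫ x in Set.Ioi (0 : ℝ),
        f x * ((θ ^ t / Real.Gamma t * (x ^ (t - 1) * Real.exp (-θ * x)) : ℝ) : ℂ)) - A)
      atTop (nhds 0) := by
    apply squeeze_zero_norm' ?_ htend0
    filter_upwards [eventually_ge_atTop (2:ℝ)] with t ht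
    exact hkey t ht
  have := hmain.add_const A
  rw [zero_add] at this
  convert this using 2 with t
  ring
end

section
/- For every θ > 0 and every y ∈ [0, 2π], the tail sum of the Gamma density sampled on the lattice 2πn + y satisfies lim_{t → ∞} (2π θ^t / Γ(t)) · Σ_{n=1}^∞ (2πn + y)^{t−1} e^{−θ(2πn + y)} = 1, where the limit is over real t → ∞. -/
open MeasureTheory Filter Real Set

namespace GammaTail

noncomputable def f (θ t z : ℝ) : ℝ := z ^ (t - 1) * Real.exp (-θ * z)

lemma f_nonneg (θ t : ℝ) {z : ℝ} (hz : 0 ≤ z) : 0 ≤ f θ t z :=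
  mul_nonneg (Real.rpow_nonneg hz _) (Real.exp_pos _).le

lemma integrableOn_f {θ t : ℝ} (hθ : 0 < θ) (ht : 0 < t) :
    IntegrableOn (f θ t) (Ioi (0:ℝ)) := by
  have h := Real.GammaIntegral_convergent ht
  have h2 : IntegrableOn (fun x => Real.exp (-(θ * x)) * (θ * x) ^ (t - 1)) (Ioi (0:ℝ)) := by
    have := (integrableOn_Ioi_comp_mul_left_iff
      (fun x : ℝ => Real.exp (-x) * x ^ (t - 1)) 0 hθ).2
    simpa using this (by simpa using h)
  have h3 : IntegrableOn (fun x => θ ^ (t-1) * f θ t x) (Ioi (0:ℝ)) := by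
    apply h2.congr_fun _ measurableSet_Ioi
    intro x hx
    simp only [f]
    rw [Real.mul_rpow hθ.le (le_of_lt hx)]
    ring_nf
  have h4 := h3.const_mul (θ ^ (t-1))⁻¹
  have hpow : (θ:ℝ) ^ (t-1) ≠ 0 := (Real.rpow_pos_of_pos hθ _).ne'
  apply (integrable_congr ?_).2 h4
  filter_upwards with x
  field_simp

lemma integral_f {θ t : ℝ} (hθ : 0 < θ) (ht : 0 < t) :
    ∫ z in Ioi (0:ℝ), f θ t z = Real.Gamma t / θ ^ t := by
  have key := integral_comp_mul_left_Ioi (fun x : ℝ => Real.exp (-x) * x ^ (t - 1)) 0 hθ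
  simp only [mul_zero] at key
  rw [← Real.Gamma_eq_integral ht] at key
  have congr1 : ∫ x in Ioi (0:ℝ), Real.exp (-(θ * x)) * (θ * x) ^ (t - 1)
      = ∫ x in Ioi (0:ℝ), θ ^ (t-1) * f θ t x := by
    apply setIntegral_congr_fun measurableSet_Ioi
    intro x hx
    simp only [f]
    rw [Real.mul_rpow hθ.le (le_of_lt hx), neg_mul]
    ring
  rw [congr1, integral_const_mul, smul_eq_mul] at key
  have hθt : θ ^ t = θ ^ (t - 1) * θ := by
    rw [← Real.rpow_add_one hθ.ne' (t-1)]; ring_nf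
  have hpow : (0:ℝ) < θ ^ (t-1) := Real.rpow_pos_of_pos hθ _
  rw [hθt]
  field_simp at key ⊢
  linarith [key]


lemma log_sub_log_le {a b : ℝ} (ha : 0 < a) (hb : 0 < b) :
    Real.log b - Real.log a ≤ (b - a) / a := by
  have h := Real.log_le_sub_one_of_pos (show 0 < b/a from div_pos hb ha)
  rw [Real.log_div hb.ne' ha.ne'] at h
  have : b/a - 1 = (b-a)/a := by field_simp
  linarith [this ▸ h]

lemma f_mono {θ t : ℝ} (hθ : 0 < θ) (ht : 1 < t) :
    MonotoneOn (f θ t) (Icc 0 ((t-1)/θ)) := by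
  intro a ha b hb hab
  rcases eq_or_lt_of_le ha.1 with h0 | h0
  · rw [f, ← h0, Real.zero_rpow (by linarith : t - 1 ≠ 0), zero_mul]
    exact f_nonneg θ t hb.1
  have hbpos : 0 < b := lt_of_lt_of_le h0 hab
  rw [f, f, Real.rpow_def_of_pos h0, Real.rpow_def_of_pos hbpos, ← Real.exp_add, ← Real.exp_add]
  apply Real.exp_le_exp.2
  have hlog := log_sub_log_le hbpos h0
  have hθb : θ * b ≤ t - 1 := by
    have := hb.2
    rw [le_div_iff₀ hθ] at this
    linarith
  -- goal: (t-1)*log a + (-θ*a) ≤ (t-1)*log b + (-θ*b)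
  have key : (t - 1) * (log a - log b) ≤ θ * (a - b) := by
    have h1 : (t-1) * (log a - log b) ≤ (t-1) * ((a-b)/b) :=
      mul_le_mul_of_nonneg_left hlog (by linarith)
    have h2 : (t-1) * ((a-b)/b) ≤ θ * (a - b) := by
      rw [← sub_nonneg]
      have : θ * (a - b) - (t - 1) * ((a - b) / b) = (b - a) * ((t-1) - θ * b) / b := by
        field_simp; ring
      rw [this]
      apply div_nonneg (mul_nonneg (by linarith) (by linarith)) hbpos.le
    linarith
  nlinarith [key]

lemma f_anti {θ t : ℝ} (hθ : 0 < θ) (ht : 1 < t) :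
    AntitoneOn (f θ t) (Ici ((t-1)/θ)) := by
  intro a ha b hb hab
  have hm : 0 < (t-1)/θ := div_pos (by linarith) hθ
  have h0 : 0 < a := lt_of_lt_of_le hm ha
  have hbpos : 0 < b := lt_of_lt_of_le h0 hab
  rw [f, f, Real.rpow_def_of_pos h0, Real.rpow_def_of_pos hbpos, ← Real.exp_add, ← Real.exp_add]
  apply Real.exp_le_exp.2
  have hlog := log_sub_log_le h0 hbpos
  have hθa : t - 1 ≤ θ * a := by
    have := ha
    rw [mem_Ici, div_le_iff₀ hθ] at this
    linarith
  have key : (t - 1) * (log b - log a) ≤ θ * (b - a) := by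
    have h1 : (t-1) * (log b - log a) ≤ (t-1) * ((b-a)/a) :=
      mul_le_mul_of_nonneg_left hlog (by linarith)
    have h2 : (t-1) * ((b-a)/a) ≤ θ * (b - a) := by
      rw [← sub_nonneg]
      have : θ * (b - a) - (t - 1) * ((b - a) / a) = (b - a) * (θ * a - (t-1)) / a := by
        field_simp
      rw [this]
      apply div_nonneg (mul_nonneg (by linarith) (by linarith)) h0.le
    linarith
  nlinarith [key]

lemma f_le_peak {θ t : ℝ} (hθ : 0 < θ) (ht : 1 < t) {z : ℝ} (hz : 0 ≤ z) :
    f θ t z ≤ f θ t ((t-1)/θ) := by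
  have hm : 0 < (t-1)/θ := div_pos (by linarith) hθ
  rcases le_total z ((t-1)/θ) with h | h
  · exact f_mono hθ ht ⟨hz, h⟩ ⟨hm.le, le_refl _⟩ h
  · exact f_anti hθ ht (mem_Ici.2 (le_refl _)) (mem_Ici.2 h) h

lemma card_middle_le {d y m : ℝ} (hd : 0 < d) (N : ℕ) :
    ((Finset.range N).filter
      (fun n : ℕ => ¬(d*((n:ℝ)+2)+y ≤ m ∨ m ≤ d*(n:ℝ)+y))).card ≤ 2 := by
  classical
  set k : ℤ := ⌈(m - y)/d⌉ with hk
  apply le_trans (Finset.card_le_card (show _ ⊆ ({(k-2).toNat, (k-1).toNat} : Finset ℕ) from ?_))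
  · exact le_trans (Finset.card_insert_le _ _) (by simp)
  · intro n hn
    simp only [Finset.mem_filter, not_or, not_le] at hn
    obtain ⟨-, h1, h2⟩ := hn
    have hr1 : (n:ℝ) < (m - y)/d := by
      rw [lt_div_iff₀ hd]; linarith [h2]
    have hr2 : (m - y)/d < (n:ℝ) + 2 := by
      rw [div_lt_iff₀ hd]; linarith [h1]
    have hub : (n:ℤ) < k := by
      have : ((n:ℤ):ℝ) < (k:ℝ) := lt_of_lt_of_le (by exact_mod_cast hr1) (Int.le_ceil _)
      exact_mod_cast this
    have hlb : (k:ℤ) - 2 ≤ (n:ℤ) := by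
      have h3 : (k:ℝ) < (m - y)/d + 1 := Int.ceil_lt_add_one _
      have : (k:ℝ) - 2 < ((n:ℤ):ℝ) + 1 := by push_cast; linarith
      have := (by exact_mod_cast this : (k:ℤ) - 2 < (n:ℤ) + 1)
      omega
    simp only [Finset.mem_insert, Finset.mem_singleton]
    omega

lemma sum_le_integral_add {g : ℝ → ℝ} {d y m : ℝ} (hd : 0 < d) (hy : 0 ≤ y)
    (hg0 : ∀ z, 0 ≤ z → 0 ≤ g z)
    (hmono : MonotoneOn g (Icc 0 m)) (hanti : AntitoneOn g (Ici m)) (hm : 0 ≤ m)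
    (hint : IntegrableOn g (Ioi (0:ℝ))) (N : ℕ) :
    ∑ n ∈ Finset.range N, d * g (d*((n:ℝ)+1)+y)
      ≤ (∫ z in Ioi (0:ℝ), g z) + 2*(d * g m) := by
  classical
  set q : ℕ → ℝ := fun n => d*((n:ℝ)+1)+y with hq
  set P : ℕ → Prop := fun n => d*((n:ℝ)+2)+y ≤ m ∨ m ≤ d*(n:ℝ)+y with hP
  set J : ℕ → Set ℝ := fun n =>
    if d*((n:ℝ)+2)+y ≤ m then Ioc (d*((n:ℝ)+1)+y) (d*((n:ℝ)+2)+y)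
    else Ioc (d*(n:ℝ)+y) (d*((n:ℝ)+1)+y) with hJ
  have hqpos : ∀ n : ℕ, 0 ≤ q n := fun n => by
    have : (0:ℝ) ≤ d*((n:ℝ)+1) := by positivity
    simp only [hq]; linarith
  have hgm : 0 ≤ g m := hg0 m hm
  -- peak bound for middle terms
  have hpeak : ∀ n : ℕ, g (q n) ≤ g m := by
    intro n
    rcases le_total (q n) m with h | h
    · exact hmono ⟨hqpos n, h⟩ ⟨hm, le_refl m⟩ h
    · exact hanti (mem_Ici.2 (le_refl m)) (mem_Ici.2 h) h
  -- split
  rw [← Finset.sum_filter_add_sum_filter_not (Finset.range N) P]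
  have hmid : ∑ n ∈ (Finset.range N).filter (fun n => ¬ P n), d * g (q n)
      ≤ 2*(d * g m) := by
    apply le_trans (Finset.sum_le_card_nsmul _ _ (d * g m) ?_)
    · have := card_middle_le (y := y) (m := m) hd N
      have h2 : ((Finset.range N).filter (fun n => ¬ P n)).card ≤ 2 := this
      calc ((Finset.range N).filter (fun n => ¬ P n)).card • (d * g m)
          ≤ 2 • (d * g m) := by
            apply nsmul_le_nsmul_left (by positivity) h2
        _ = 2*(d*g m) := by simp [two_smul]; ring
    · intro n hn
      exact mul_le_mul_of_nonneg_left (hpeak n) hd.le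
  have hmain : ∑ n ∈ (Finset.range N).filter P, d * g (q n)
      ≤ ∫ z in Ioi (0:ℝ), g z := by
    set F := (Finset.range N).filter P with hF
    -- termwise bound
    have hterm : ∀ n ∈ F, d * g (q n) ≤ ∫ z in J n, g z := by
      intro n hn
      have hPn : P n := (Finset.mem_filter.1 hn).2
      by_cases hc : d*((n:ℝ)+2)+y ≤ m
      · have hJn : J n = Ioc (d*((n:ℝ)+1)+y) (d*((n:ℝ)+2)+y) := if_pos hc
        rw [hJn]
        have hlow : ∀ z ∈ Ioc (d*((n:ℝ)+1)+y) (d*((n:ℝ)+2)+y), g (q n) ≤ g z := by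
          intro z hz
          have hqn : q n = d*((n:ℝ)+1)+y := rfl
          have hz1 := hz.1
          have hz2 := hz.2
          have hz0 : 0 ≤ z := le_trans (hqpos n) (hqn ▸ hz1.le)
          have hqm : q n ≤ m := by rw [hqn]; linarith
          exact hmono ⟨hqpos n, hqm⟩ ⟨hz0, le_trans hz2 hc⟩ (hqn ▸ hz1.le)
        have := setIntegral_ge_of_const_le (c := g (q n)) measurableSet_Ioc
          (by simp) hlow (hint.mono_set (by
            intro z hz
            exact lt_of_le_of_lt (by positivity : (0:ℝ) ≤ d*((n:ℝ)+1)+y) hz.1))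
        rw [Real.volume_real_Ioc_of_le (by linarith), smul_eq_mul, mul_comm _ (g (q n))] at this
        calc d * g (q n) = g (q n) * (d*((n:ℝ)+2)+y - (d*((n:ℝ)+1)+y)) := by ring_nf
          _ ≤ _ := this
      · have hdec : m ≤ d*(n:ℝ)+y := hPn.resolve_left hc
        have hJn : J n = Ioc (d*(n:ℝ)+y) (d*((n:ℝ)+1)+y) := if_neg hc
        rw [hJn]
        have hlow : ∀ z ∈ Ioc (d*(n:ℝ)+y) (d*((n:ℝ)+1)+y), g (q n) ≤ g z := by
          intro z hz
          have hqn : q n = d*((n:ℝ)+1)+y := rfl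
          have hz1 := hz.1
          have hz2 := hz.2
          have hmq : m ≤ q n := by rw [hqn]; linarith
          exact hanti (mem_Ici.2 (le_trans hdec hz1.le)) (mem_Ici.2 hmq) (hqn ▸ hz2)
        have := setIntegral_ge_of_const_le (c := g (q n)) measurableSet_Ioc
          (by simp) hlow (hint.mono_set (by
            intro z hz
            exact lt_of_le_of_lt (by positivity : (0:ℝ) ≤ d*(n:ℝ)+y) hz.1))
        rw [Real.volume_real_Ioc_of_le (by linarith), smul_eq_mul, mul_comm _ (g (q n))] at this
        calc d * g (q n) = g (q n) * (d*((n:ℝ)+1)+y - (d*(n:ℝ)+y)) := by ring_nf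
          _ ≤ _ := this
    apply le_trans (Finset.sum_le_sum hterm)
    -- disjointness
    have hdisj : (↑F : Set ℕ).PairwiseDisjoint J := by
      intro a ha b hb hab
      have hPa : P a := (Finset.mem_filter.1 ha).2
      have hPb : P b := (Finset.mem_filter.1 hb).2
      have key : ∀ i j : ℕ, P i → P j → i < j → Disjoint (J i) (J j) := by
        intro i j hPi hPj hij
        simp only [hJ]
        have hij1 : (i:ℝ) + 1 ≤ (j:ℝ) := by exact_mod_cast hij
        split_ifs with h1 h2 h2
        all_goals rw [Set.Ioc_disjoint_Ioc]
        · exact le_trans (min_le_left _ _) (le_trans (by nlinarith) (le_max_right _ _))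
        · have hdj : m ≤ d*(j:ℝ)+y := hPj.resolve_left h2
          exact le_trans (min_le_left _ _) (le_trans (le_trans h1 hdj) (le_max_right _ _))
        · exact le_trans (min_le_right _ _) (le_trans (by nlinarith) (le_max_left _ _))
        · exact le_trans (min_le_left _ _) (le_trans (by nlinarith) (le_max_right _ _))
      rcases lt_or_gt_of_ne hab with h | h
      · exact key a b hPa hPb h
      · exact (key b a hPb hPa h).symm
    have hJmeas : ∀ n ∈ F, MeasurableSet (J n) := by
      intro n _
      simp only [hJ]
      split_ifs <;> exact measurableSet_Ioc
    have hJint : ∀ n ∈ F, IntegrableOn g (J n) := by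
      intro n _
      apply hint.mono_set
      simp only [hJ]
      split_ifs <;> intro z hz
      · exact lt_of_le_of_lt (by positivity : (0:ℝ) ≤ d*((n:ℝ)+1)+y) hz.1
      · exact lt_of_le_of_lt (by positivity : (0:ℝ) ≤ d*(n:ℝ)+y) hz.1
    rw [← integral_biUnion_finset F hJmeas hdisj hJint]
    apply setIntegral_mono_set hint
    · exact (ae_restrict_iff' measurableSet_Ioi).2 (ae_of_all _ fun x hx => hg0 x (le_of_lt hx))
    · apply HasSubset.Subset.eventuallyLE
      intro z hz
      simp only [Set.mem_iUnion] at hz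
      obtain ⟨i, _, hzi⟩ := hz
      revert hzi
      simp only [hJ]
      split_ifs <;> intro hzi
      · exact lt_of_le_of_lt (by positivity : (0:ℝ) ≤ d*((i:ℝ)+1)+y) hzi.1
      · exact lt_of_le_of_lt (by positivity : (0:ℝ) ≤ d*(i:ℝ)+y) hzi.1
  linarith

lemma integral_le_tsum_add {g : ℝ → ℝ} {d y m : ℝ} (hd : 0 < d) (hy : 0 ≤ y)
    (hg0 : ∀ z, 0 ≤ z → 0 ≤ g z)
    (hmono : MonotoneOn g (Icc 0 m)) (hanti : AntitoneOn g (Ici m)) (hm : 0 ≤ m)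
    (hint : IntegrableOn g (Ioi (0:ℝ)))
    (hsum : Summable (fun n : ℕ => g (d*((n:ℝ)+1)+y))) :
    (∫ z in Ioi (d + y), g z) ≤ (∑' n : ℕ, d * g (d*((n:ℝ)+1)+y)) + d * g m := by
  classical
  set a : ℕ → ℝ := fun n => d*((n:ℝ)+1)+y with ha
  have hgm : 0 ≤ g m := hg0 m hm
  have ha0 : ∀ n : ℕ, 0 ≤ a n := fun n => by
    have : (0:ℝ) ≤ d*((n:ℝ)+1) := by positivity
    simp only [ha]; linarith
  have hamono : ∀ n : ℕ, a n < a (n+1) := fun n => by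
    simp only [ha]; push_cast; nlinarith
  have haN : Tendsto a atTop atTop := by
    apply tendsto_atTop_atTop.2
    intro b
    obtain ⟨N, hN⟩ := exists_nat_gt ((b - y)/d)
    refine ⟨N, fun n hn => ?_⟩
    have : (b-y)/d < (n:ℝ) := lt_of_lt_of_le hN (by exact_mod_cast hn)
    rw [div_lt_iff₀ hd] at this
    simp only [ha]; nlinarith [Nat.cast_nonneg (α := ℝ) n]
  have hintN : ∀ k : ℕ, IntervalIntegrable g volume (a k) (a (k+1)) := by
    intro k
    rw [intervalIntegrable_iff_integrableOn_Ioc_of_le (hamono k).le]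
    exact hint.mono_set (fun z hz => lt_of_le_of_lt (ha0 k) hz.1)
  -- per-interval bound
  have hbound : ∀ k : ℕ, (∫ x in (a k)..(a (k+1)), g x) ≤
      (if m ≤ a k then d * g (a k) else if a (k+1) < m then d * g (a (k+1)) else d * g m) := by
    intro k
    rw [intervalIntegral.integral_of_le (hamono k).le]
    have hup : ∀ c : ℝ, (∀ z ∈ Ioc (a k) (a (k+1)), g z ≤ c) →
        (∫ z in Ioc (a k) (a (k+1)), g z) ≤ d * c := by
      intro c hc
      have h1 : (∫ z in Ioc (a k) (a (k+1)), g z) ≤ ∫ _ in Ioc (a k) (a (k+1)), c := by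
        apply setIntegral_mono_on
          (hint.mono_set (fun z hz => lt_of_le_of_lt (ha0 k) hz.1))
          (integrableOn_const measure_Ioc_lt_top.ne) measurableSet_Ioc hc
      rw [setIntegral_const, Real.volume_real_Ioc_of_le (hamono k).le, smul_eq_mul] at h1
      have hlen : a (k+1) - a k = d := by simp only [ha]; push_cast; ring
      rw [hlen] at h1
      exact h1
    split_ifs with h1 h2
    · refine hup _ (fun z hz => hanti (mem_Ici.2 h1) (mem_Ici.2 (le_trans h1 hz.1.le)) hz.1.le)
    · refine hup _ (fun z hz => hmono ⟨le_trans (ha0 k) hz.1.le, by linarith [hz.2]⟩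
        ⟨le_trans (ha0 k) (hamono k).le, h2.le⟩ hz.2)
    · refine hup _ (fun z hz => ?_)
      rcases le_total z m with h | h
      · exact hmono ⟨le_trans (ha0 k) hz.1.le, h⟩ ⟨hm, le_refl m⟩ h
      · exact hanti (mem_Ici.2 (le_refl m)) (mem_Ici.2 h) h
  -- partial sums bound
  have hpartial : ∀ N : ℕ, (∫ x in (a 0)..(a N), g x) ≤
      (∑' n : ℕ, d * g (a n)) + d * g m := by
    intro N
    rw [← intervalIntegral.sum_integral_adjacent_intervals (fun k _ => hintN k)]
    apply le_trans (Finset.sum_le_sum (fun k _ => hbound k))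
    set P : ℕ → Prop := fun k => m ≤ a k with hP
    set Q : ℕ → Prop := fun k => a (k+1) < m with hQ
    rw [← Finset.sum_filter_add_sum_filter_not (Finset.range N) P]
    have e1 : ∑ k ∈ (Finset.range N).filter P,
        (if m ≤ a k then d * g (a k) else if a (k+1) < m then d * g (a (k+1)) else d * g m)
        = ∑ k ∈ (Finset.range N).filter P, d * g (a k) := by
      apply Finset.sum_congr rfl
      intro k hk
      rw [if_pos ((Finset.mem_filter.1 hk).2)]
    rw [e1]
    rw [← Finset.sum_filter_add_sum_filter_not ((Finset.range N).filter (fun k => ¬ P k)) Q]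
    have e2 : ∑ k ∈ ((Finset.range N).filter (fun k => ¬ P k)).filter Q,
        (if m ≤ a k then d * g (a k) else if a (k+1) < m then d * g (a (k+1)) else d * g m)
        = ∑ k ∈ ((Finset.range N).filter (fun k => ¬ P k)).filter Q, d * g (a (k+1)) := by
      apply Finset.sum_congr rfl
      intro k hk
      simp only [Finset.mem_filter] at hk
      rw [if_neg hk.1.2, if_pos hk.2]
    rw [e2]
    have e3 : ∑ k ∈ ((Finset.range N).filter (fun k => ¬ P k)).filter (fun k => ¬ Q k),
        (if m ≤ a k then d * g (a k) else if a (k+1) < m then d * g (a (k+1)) else d * g m)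
        ≤ d * g m := by
      have hcard : (((Finset.range N).filter (fun k => ¬ P k)).filter (fun k => ¬ Q k)).card ≤ 1 := by
        apply Finset.card_le_one.2
        intro i hi j hj
        simp only [Finset.mem_filter, hP, hQ, not_le, not_lt, ha] at hi hj
        obtain ⟨⟨-, hi1⟩, hi2⟩ := hi
        obtain ⟨⟨-, hj1⟩, hj2⟩ := hj
        push_cast at hi1 hi2 hj1 hj2
        by_contra hne
        rcases lt_or_gt_of_ne hne with h | h
        · have : (i:ℝ) + 1 ≤ (j:ℝ) := by exact_mod_cast h
          nlinarith
        · have : (j:ℝ) + 1 ≤ (i:ℝ) := by exact_mod_cast h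
          nlinarith
      have : ∀ k ∈ ((Finset.range N).filter (fun k => ¬ P k)).filter (fun k => ¬ Q k),
          (if m ≤ a k then d * g (a k) else if a (k+1) < m then d * g (a (k+1)) else d * g m)
          ≤ d * g m := by
        intro k hk
        simp only [Finset.mem_filter] at hk
        rw [if_neg hk.1.2, if_neg hk.2]
      apply le_trans (Finset.sum_le_card_nsmul _ _ _ this)
      calc _ ≤ 1 • (d * g m) := nsmul_le_nsmul_left (by positivity) hcard
        _ = d * g m := one_smul _ _
    have e4 : ∑ k ∈ (Finset.range N).filter P, d * g (a k)
        + ∑ k ∈ ((Finset.range N).filter (fun k => ¬ P k)).filter Q, d * g (a (k+1))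
        ≤ ∑' n : ℕ, d * g (a n) := by
      have himg : ∑ k ∈ ((Finset.range N).filter (fun k => ¬ P k)).filter Q, d * g (a (k+1))
          = ∑ j ∈ (((Finset.range N).filter (fun k => ¬ P k)).filter Q).image Nat.succ,
              d * g (a j) := by
        rw [Finset.sum_image (fun x _ y _ h => Nat.succ_injective h)]
      rw [himg, ← Finset.sum_union]
      · exact Summable.sum_le_tsum _ (fun i _ => mul_nonneg hd.le (hg0 _ (ha0 i))) (hsum.mul_left d)
      · rw [Finset.disjoint_left]
        intro j hj hj2
        simp only [Finset.mem_filter] at hj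
        simp only [Finset.mem_image, Finset.mem_filter] at hj2
        obtain ⟨k, ⟨⟨-, hkP⟩, hkQ⟩, rfl⟩ := hj2
        exact absurd hj.2 (not_le.2 hkQ)
    linarith
  -- pass to the limit
  have ha0' : a 0 = d + y := by simp [ha]
  have hsub : Ioi (a 0) ⊆ Ioi (0:ℝ) := fun z hz => by
    have := mem_Ioi.1 hz
    rw [ha0'] at this
    exact mem_Ioi.2 (by linarith)
  have hlim := intervalIntegral_tendsto_integral_Ioi (a 0) (hint.mono_set hsub) haN
  rw [ha0'] at hlim
  exact le_of_tendsto hlim (Eventually.of_forall (fun N => ha0' ▸ hpartial N))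


lemma Gamma_ge_peak {t : ℝ} (ht : 2 ≤ t) :
    Real.sqrt (t-1) * ((t-1) ^ (t-1) * Real.exp (-(t-1) - 1)) ≤ Real.Gamma t := by
  set s : ℝ := t - 1 with hs
  have hs1 : 1 ≤ s := by simp only [hs]; linarith
  have hs0 : 0 < s := by linarith
  have hsqrt : 0 < Real.sqrt s := Real.sqrt_pos.2 hs0
  have hsqs : Real.sqrt s ^ 2 = s := Real.sq_sqrt hs0.le
  have hsqle : Real.sqrt s ≤ s := by
    nlinarith [hsqrt.le]
  rw [Real.Gamma_eq_integral (by linarith : 0 < t)]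
  have key : ∀ z ∈ Ioc s (s + Real.sqrt s),
      s ^ s * Real.exp (-s - 1) ≤ Real.exp (-z) * z ^ (t-1) := by
    intro z hz
    have hz1 := hz.1
    have hz2 := hz.2
    have hz0 : 0 < z := lt_of_lt_of_le hs0 hz1.le
    rw [← hs, Real.rpow_def_of_pos hz0, Real.rpow_def_of_pos hs0, ← Real.exp_add, ← Real.exp_add]
    apply Real.exp_le_exp.2
    have hlog : (z - s)/z ≤ Real.log z - Real.log s := by
      have h := log_sub_log_le hz0 hs0
      have he : (s-z)/z = -((z-s)/z) := by ring
      linarith [he ▸ h]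
    -- want : s * log s + (-s - 1) ≤ -z + s * log z
    have h1 : s * ((z-s)/z) ≤ s * (Real.log z - Real.log s) :=
      mul_le_mul_of_nonneg_left hlog hs0.le
    have h2 : z - s - 1 ≤ s * ((z-s)/z) := by
      rw [← sub_nonneg]
      have he : s * ((z-s)/z) - (z - s - 1) = (z - (z-s)^2) / z := by
        field_simp; ring
      rw [he]
      apply div_nonneg _ hz0.le
      nlinarith [hz2, hz1.le, hsqs]
    nlinarith [h1, h2]
  have hmono := setIntegral_ge_of_const_le (c := s ^ s * Real.exp (-s - 1))
    measurableSet_Ioc (by simp) key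
    ((Real.GammaIntegral_convergent (by linarith : 0 < t)).mono_set
      (fun z hz => lt_of_lt_of_le hs0 (le_of_lt hz.1)))
  rw [Real.volume_real_Ioc_of_le (by linarith), smul_eq_mul, mul_comm (s + Real.sqrt s - s)] at hmono
  have hlen : s + Real.sqrt s - s = Real.sqrt s := by ring
  rw [hlen] at hmono
  have hsubint : ∫ z in Ioc s (s + Real.sqrt s), Real.exp (-z) * z ^ (t-1)
      ≤ ∫ z in Ioi (0:ℝ), Real.exp (-z) * z ^ (t-1) := by
    apply setIntegral_mono_set (Real.GammaIntegral_convergent (by linarith : 0 < t))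
    · exact (ae_restrict_iff' measurableSet_Ioi).2 (ae_of_all _ fun x hx =>
        mul_nonneg (Real.exp_pos _).le (Real.rpow_nonneg (le_of_lt hx) _))
    · exact HasSubset.Subset.eventuallyLE (fun z hz => lt_of_lt_of_le hs0 (le_of_lt hz.1))
  calc Real.sqrt s * (s ^ s * Real.exp (-s - 1))
      = s ^ s * Real.exp (-s-1) * Real.sqrt s := by ring
    _ ≤ ∫ z in Ioc s (s + Real.sqrt s), Real.exp (-z) * z ^ (t-1) := hmono
    _ ≤ _ := hsubint

-- Gamma lower bound: exponential beating
lemma Gamma_ge_exp {c t : ℝ} (hc : 0 < c) (ht : 1 ≤ t) :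
    (2*c) ^ (t-1) * Real.exp (-(2*c+1)) ≤ Real.Gamma t := by
  rw [Real.Gamma_eq_integral (by linarith : 0 < t)]
  have key : ∀ z ∈ Ioc (2*c) (2*c+1),
      (2*c) ^ (t-1) * Real.exp (-(2*c+1)) ≤ Real.exp (-z) * z ^ (t-1) := by
    intro z hz
    have hz0 : 0 < z := lt_of_lt_of_le (by linarith) hz.1.le
    have h1 : (2*c) ^ (t-1) ≤ z ^ (t-1) :=
      Real.rpow_le_rpow (by linarith) hz.1.le (by linarith)
    have h2 : Real.exp (-(2*c+1)) ≤ Real.exp (-z) := Real.exp_le_exp.2 (by linarith [hz.2])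
    calc (2*c) ^ (t-1) * Real.exp (-(2*c+1)) ≤ z ^ (t-1) * Real.exp (-z) :=
          mul_le_mul h1 h2 (Real.exp_pos _).le (Real.rpow_nonneg hz0.le _)
      _ = Real.exp (-z) * z ^ (t-1) := by ring
  have hmono := setIntegral_ge_of_const_le (c := (2*c) ^ (t-1) * Real.exp (-(2*c+1)))
    measurableSet_Ioc (by simp) key
    ((Real.GammaIntegral_convergent (by linarith : 0 < t)).mono_set
      (fun z hz => lt_of_lt_of_le (by linarith) (le_of_lt hz.1)))
  rw [Real.volume_real_Ioc_of_le (by linarith), smul_eq_mul] at hmono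
  have hlen : 2*c + 1 - 2*c = 1 := by ring
  rw [hlen, one_mul] at hmono
  refine le_trans hmono ?_
  apply setIntegral_mono_set (Real.GammaIntegral_convergent (by linarith : 0 < t))
  · exact (ae_restrict_iff' measurableSet_Ioi).2 (ae_of_all _ fun x hx =>
      mul_nonneg (Real.exp_pos _).le (Real.rpow_nonneg (le_of_lt hx) _))
  · exact HasSubset.Subset.eventuallyLE (fun z hz => lt_of_lt_of_le (by linarith) (le_of_lt hz.1))












lemma peak_val {θ t : ℝ} (hθ : 0 < θ) (ht : 1 < t) :
    θ ^ t * f θ t ((t-1)/θ) = θ * ((t-1) ^ (t-1) * Real.exp (-(t-1))) := by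
  rw [f, Real.div_rpow (by linarith : (0:ℝ) ≤ t-1) hθ.le]
  have h1 : -θ * ((t-1)/θ) = -(t-1) := by field_simp
  rw [h1]
  have hθt : θ ^ t = θ ^ (t-1) * θ := by
    rw [← Real.rpow_add_one hθ.ne']; ring_nf
  rw [hθt]
  have hpow : (0:ℝ) < θ ^ (t-1) := Real.rpow_pos_of_pos hθ _
  field_simp

lemma integral_head_le {θ t X : ℝ} (hθ : 0 < θ) (ht : 1 ≤ t) (hX : 0 < X) :
    ∫ z in Ioc (0:ℝ) X, f θ t z ≤ X ^ t := by
  have hup : ∀ z ∈ Ioc (0:ℝ) X, f θ t z ≤ X ^ (t-1) := by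
    intro z hz
    have h1 : z ^ (t-1) ≤ X ^ (t-1) := Real.rpow_le_rpow hz.1.le hz.2 (by linarith)
    have h2 : Real.exp (-θ * z) ≤ 1 := by
      rw [Real.exp_le_one_iff]
      nlinarith [hz.1.le]
    calc f θ t z ≤ z ^ (t-1) * 1 :=
        mul_le_mul_of_nonneg_left h2 (Real.rpow_nonneg hz.1.le _)
      _ ≤ X ^ (t-1) := by rw [mul_one]; exact h1
  have h1 : (∫ z in Ioc (0:ℝ) X, f θ t z) ≤ ∫ _ in Ioc (0:ℝ) X, X ^ (t-1) := by
    apply setIntegral_mono_on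
      ((integrableOn_f hθ (by linarith)).mono_set
        (fun z hz => mem_Ioi.2 hz.1))
      (integrableOn_const measure_Ioc_lt_top.ne) measurableSet_Ioc hup
  rw [setIntegral_const, Real.volume_real_Ioc_of_le hX.le, smul_eq_mul, sub_zero] at h1
  calc (∫ z in Ioc (0:ℝ) X, f θ t z) ≤ X * X ^ (t-1) := h1
    _ = X ^ t := by
        rw [mul_comm, ← Real.rpow_add_one hX.ne']; ring_nf

theorem main (θ y : ℝ) (hθ : 0 < θ)
    (hy : y ∈ Set.Icc (0 : ℝ) (2 * Real.pi)) :
    Tendsto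
      (fun t : ℝ => (2 * Real.pi * θ ^ t / Real.Gamma t) *
        ∑' n : ℕ, (2 * Real.pi * ((n : ℝ) + 1) + y) ^ (t - 1) *
          Real.exp (-θ * (2 * Real.pi * ((n : ℝ) + 1) + y)))
      atTop (nhds 1) := by
  obtain ⟨hy0, hy2⟩ := hy
  have hπ := Real.pi_pos
  set d : ℝ := 2 * Real.pi with hd_def
  have hd : 0 < d := by positivity
  set X : ℝ := d + y with hX_def
  have hX : 0 < X := by positivity
  set c : ℝ := max (θ * X) 1 with hc_def
  have hc1 : (1:ℝ) ≤ c := le_max_right _ _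
  have hc : 0 < c := lt_of_lt_of_le one_pos hc1
  have hcX : θ * X ≤ c := le_max_left _ _
  set B1 : ℝ → ℝ := fun t => (c * Real.exp (2*c+1)) * (1/2 : ℝ) ^ (t-1) with hB1_def
  set B2 : ℝ → ℝ := fun t => (d * (θ * Real.exp 1)) * (Real.sqrt (t-1))⁻¹ with hB2_def
  -- tendsto of bounds
  have hsqrtTop : Tendsto (fun t : ℝ => Real.sqrt (t-1)) atTop atTop := by
    apply tendsto_atTop_atTop.2
    intro b
    refine ⟨b^2 + 1, fun a ha => ?_⟩
    calc b ≤ |b| := le_abs_self b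
      _ = Real.sqrt (b^2) := (Real.sqrt_sq_eq_abs b).symm
      _ ≤ Real.sqrt (a - 1) := Real.sqrt_le_sqrt (by linarith)
  have hB2_0 : Tendsto B2 atTop (nhds 0) := by
    have := hsqrtTop.inv_tendsto_atTop.const_mul (d * (θ * Real.exp 1))
    simpa [hB2_def, Function.comp] using this
  have hB1_0 : Tendsto B1 atTop (nhds 0) := by
    have hbase := tendsto_rpow_atTop_of_base_lt_one (1/2 : ℝ) (by norm_num) (by norm_num)
    have hsub : Tendsto (fun t : ℝ => t - 1) atTop atTop :=
      tendsto_atTop_add_const_right _ _ tendsto_id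
    have := (hbase.comp hsub).const_mul (c * Real.exp (2*c+1))
    simpa [hB1_def, Function.comp] using this
  have hlow : Tendsto (fun t => 1 - B1 t - B2 t) atTop (nhds 1) := by
    have := ((tendsto_const_nhds (α := ℝ) (x := (1:ℝ)) (f := atTop)).sub hB1_0).sub hB2_0
    simpa using this
  have hup : Tendsto (fun t => 1 + 2 * B2 t) atTop (nhds 1) := by
    have := (tendsto_const_nhds (α := ℝ) (x := (1:ℝ)) (f := atTop)).add (hB2_0.const_mul 2)
    simpa using this
  have key : ∀ t : ℝ, 2 ≤ t →
      1 - B1 t - B2 t ≤ (d * θ ^ t / Real.Gamma t) *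
        (∑' n : ℕ, (d * ((n : ℝ) + 1) + y) ^ (t - 1) *
          Real.exp (-θ * (d * ((n : ℝ) + 1) + y)))
      ∧ (d * θ ^ t / Real.Gamma t) *
        (∑' n : ℕ, (d * ((n : ℝ) + 1) + y) ^ (t - 1) *
          Real.exp (-θ * (d * ((n : ℝ) + 1) + y))) ≤ 1 + 2 * B2 t := by
    intro t ht2
    have ht1 : 1 < t := by linarith
    have ht0 : 0 < t := by linarith
    have hΓ : 0 < Real.Gamma t := Real.Gamma_pos_of_pos ht0
    have hG : 0 < θ ^ t := Real.rpow_pos_of_pos hθ t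
    set m : ℝ := (t-1)/θ with hm_def
    have hm0 : 0 ≤ m := div_nonneg (by linarith) hθ.le
    have hg0 : ∀ z, 0 ≤ z → 0 ≤ f θ t z := fun z hz => f_nonneg θ t hz
    have hmono := f_mono hθ ht1
    have hanti := f_anti hθ ht1
    have hint := integrableOn_f hθ ht0
    set E : ℝ := ∫ z in Ioi (0:ℝ), f θ t z with hE_def
    have hI : E = Real.Gamma t / θ ^ t := integral_f hθ ht0
    set fm : ℝ := f θ t m with hfm_def
    have hfm0 : 0 ≤ fm := hg0 m hm0
    have hterm_eq : ∀ n : ℕ, (d * ((n : ℝ) + 1) + y) ^ (t - 1) *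
        Real.exp (-θ * (d * ((n : ℝ) + 1) + y)) = f θ t (d*((n:ℝ)+1)+y) := fun n => rfl
    have hsum_bound : ∀ N : ℕ, ∑ n ∈ Finset.range N, d * f θ t (d*((n:ℝ)+1)+y)
        ≤ E + 2*(d * fm) :=
      fun N => sum_le_integral_add hd hy0 hg0 hmono hanti hm0 hint N
    have hterm_nonneg : ∀ n : ℕ, 0 ≤ f θ t (d*((n:ℝ)+1)+y) := by
      intro n
      apply hg0
      positivity
    have hsummable : Summable (fun n : ℕ => f θ t (d*((n:ℝ)+1)+y)) := by
      apply summable_of_sum_range_le (c := (E + 2*(d * fm))/d) hterm_nonneg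
      intro N
      rw [le_div_iff₀ hd]
      calc (∑ i ∈ Finset.range N, f θ t (d*((i:ℝ)+1)+y)) * d
          = ∑ n ∈ Finset.range N, d * f θ t (d*((n:ℝ)+1)+y) := by
            rw [Finset.sum_mul]
            exact Finset.sum_congr rfl (fun i _ => by ring)
        _ ≤ E + 2*(d * fm) := hsum_bound N
    set S : ℝ := ∑' n : ℕ, f θ t (d*((n:ℝ)+1)+y) with hS_def
    have hS0 : 0 ≤ S := tsum_nonneg hterm_nonneg
    have hub : d * S ≤ E + 2*(d * fm) := by
      have h := Real.tsum_le_of_sum_range_le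
        (f := fun n : ℕ => d * f θ t (d*((n:ℝ)+1)+y))
        (fun n => mul_nonneg hd.le (hterm_nonneg n)) hsum_bound
      rwa [tsum_mul_left] at h
    have hlbI : (∫ z in Ioi X, f θ t z) ≤ d * S + d * fm := by
      have h := integral_le_tsum_add hd hy0 hg0 hmono hanti hm0 hint hsummable
      rwa [tsum_mul_left] at h
    have hsplit : E = (∫ z in Ioc (0:ℝ) X, f θ t z) + ∫ z in Ioi X, f θ t z := by
      rw [hE_def, ← Ioc_union_Ioi_eq_Ioi hX.le]
      exact setIntegral_union Ioc_disjoint_Ioi_same measurableSet_Ioi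
        (hint.mono_set (fun z hz => mem_Ioi.2 hz.1))
        (hint.mono_set (fun z hz => mem_Ioi.2 (lt_trans hX (mem_Ioi.1 hz))))
    have hhead : (∫ z in Ioc (0:ℝ) X, f θ t z) ≤ X ^ t :=
      integral_head_le hθ ht1.le hX
    have hlb : E - X ^ t - d * fm ≤ d * S := by linarith
    -- ratio bounds
    set s : ℝ := t - 1 with hs_def
    have hs0 : 0 < s := by simp only [hs_def]; linarith
    have hsq : 0 < Real.sqrt s := Real.sqrt_pos.2 hs0
    set A : ℝ := s ^ s * Real.exp (-s) with hA_def
    have hA : 0 < A := mul_pos (Real.rpow_pos_of_pos hs0 _) (Real.exp_pos _)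
    have hpv : θ ^ t * fm = θ * A := peak_val hθ ht1
    have hR2 : (θ ^ t / Real.Gamma t) * (d * fm) ≤ B2 t := by
      have hΓpk : Real.sqrt s * (A * Real.exp (-1)) ≤ Real.Gamma t := by
        have h := Gamma_ge_peak ht2
        have he : s ^ s * Real.exp (-s - 1) = A * Real.exp (-1) := by
          rw [hA_def, mul_assoc, ← Real.exp_add]; ring_nf
        rw [← hs_def, he] at h
        exact h
      have hpos : 0 < Real.sqrt s * (A * Real.exp (-1)) := by positivity
      have h1 : (θ ^ t / Real.Gamma t) * (d * fm) = d * (θ ^ t * fm) / Real.Gamma t := by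
        ring
      rw [h1, hpv]
      have h1' : d * (θ * A) / Real.Gamma t = d * θ * A / Real.Gamma t := by ring_nf
      rw [h1']
      have h2 : d * θ * A / Real.Gamma t ≤ d * θ * A / (Real.sqrt s * (A * Real.exp (-1))) :=
        div_le_div_of_nonneg_left (by positivity) hpos hΓpk
      refine le_trans h2 (le_of_eq ?_)
      rw [hB2_def]
      show _ = d * (θ * Real.exp 1) * (Real.sqrt s)⁻¹
      rw [Real.exp_neg]
      field_simp
    have hR1 : (θ ^ t / Real.Gamma t) * X ^ t ≤ B1 t := by
      have hmulr : θ ^ t * X ^ t = (θ * X) ^ t := (Real.mul_rpow hθ.le hX.le).symm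
      have h1 : (θ * X) ^ t ≤ c ^ t := Real.rpow_le_rpow (by positivity) hcX ht0.le
      have hΓexp : (2*c) ^ s * Real.exp (-(2*c+1)) ≤ Real.Gamma t := by
        have := Gamma_ge_exp hc ht1.le
        rwa [← hs_def] at this
      have hpos : 0 < (2*c) ^ s * Real.exp (-(2*c+1)) := by positivity
      have h2 : (θ ^ t / Real.Gamma t) * X ^ t = (θ * X) ^ t / Real.Gamma t := by
        rw [← hmulr]; ring
      rw [h2]
      have h3 : (θ * X) ^ t / Real.Gamma t ≤ c ^ t / Real.Gamma t := by gcongr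
      have h4 : c ^ t / Real.Gamma t ≤ c ^ t / ((2*c) ^ s * Real.exp (-(2*c+1))) := by
        gcongr
      have h5 : c ^ t / ((2*c) ^ s * Real.exp (-(2*c+1))) = B1 t := by
        rw [hB1_def]
        have hct : c ^ t = c ^ s * c := by
          have : t = s + 1 := by rw [hs_def]; ring
          rw [this, Real.rpow_add_one hc.ne']
        have hhalf : (1/2 : ℝ) ^ s = c ^ s / (2*c) ^ s := by
          rw [← Real.div_rpow hc.le (by positivity : (0:ℝ) ≤ 2*c)]
          congr 1
          field_simp
        simp only
        rw [← hs_def, hct, hhalf, Real.exp_neg]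
        field_simp
      calc (θ * X) ^ t / Real.Gamma t ≤ c ^ t / Real.Gamma t := h3
        _ ≤ _ := h4
        _ = B1 t := h5
    -- final combination
    have hFeq : (d * θ ^ t / Real.Gamma t) *
        (∑' n : ℕ, (d * ((n : ℝ) + 1) + y) ^ (t - 1) *
          Real.exp (-θ * (d * ((n : ℝ) + 1) + y)))
        = (θ ^ t / Real.Gamma t) * (d * S) := by
      have hTs : (∑' n : ℕ, (d * ((n : ℝ) + 1) + y) ^ (t - 1) *
          Real.exp (-θ * (d * ((n : ℝ) + 1) + y))) = S := by
        rw [hS_def]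
        exact tsum_congr hterm_eq
      rw [hTs]
      ring
    have hIone : (θ ^ t / Real.Gamma t) * E = 1 := by
      rw [hI]
      field_simp
    have hGS : 0 ≤ θ ^ t / Real.Gamma t := by positivity
    constructor
    · rw [hFeq]
      have h6 : (θ ^ t / Real.Gamma t) * (E - X ^ t - d * fm)
          ≤ (θ ^ t / Real.Gamma t) * (d * S) :=
        mul_le_mul_of_nonneg_left hlb hGS
      have h7 : (θ ^ t / Real.Gamma t) * (E - X ^ t - d * fm)
          = 1 - (θ ^ t / Real.Gamma t) * X ^ t - (θ ^ t / Real.Gamma t) * (d * fm) := by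
        rw [mul_sub, mul_sub, hIone]
      rw [h7] at h6
      have : 1 - B1 t - B2 t ≤ 1 - (θ ^ t / Real.Gamma t) * X ^ t
          - (θ ^ t / Real.Gamma t) * (d * fm) := by linarith
      linarith
    · rw [hFeq]
      have h6 : (θ ^ t / Real.Gamma t) * (d * S)
          ≤ (θ ^ t / Real.Gamma t) * (E + 2*(d * fm)) :=
        mul_le_mul_of_nonneg_left hub hGS
      have h7 : (θ ^ t / Real.Gamma t) * (E + 2*(d * fm))
          = 1 + 2 * ((θ ^ t / Real.Gamma t) * (d * fm)) := by
        rw [mul_add, hIone]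
        ring
      rw [h7] at h6
      linarith
  apply tendsto_of_tendsto_of_tendsto_of_le_of_le' hlow hup
  · filter_upwards [eventually_ge_atTop (2:ℝ)] with t ht2
    exact (key t ht2).1
  · filter_upwards [eventually_ge_atTop (2:ℝ)] with t ht2
    exact (key t ht2).2

end GammaTail

open MeasureTheory Filter Real

/-- For every `θ > 0` and `y ∈ [0, 2π]`, the tail sum of the Gamma density
sampled on the lattice `2πn + y`, `n ≥ 1`, normalized by `2π θ^t / Γ(t)`,
converges to `1` as the (real) shape parameter `t → ∞`. -/
theorem gamma_lattice_tail_sum_tendsto_one (θ y : ℝ) (hθ : 0 < θ)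
    (hy : y ∈ Set.Icc (0 : ℝ) (2 * Real.pi)) :
    Tendsto
      (fun t : ℝ => (2 * Real.pi * θ ^ t / Real.Gamma t) *
        ∑' n : ℕ, (2 * Real.pi * ((n : ℝ) + 1) + y) ^ (t - 1) *
          Real.exp (-θ * (2 * Real.pi * ((n : ℝ) + 1) + y)))
      atTop (nhds 1) :=
  GammaTail.main θ y hθ hy
end

section
/- Lévy–Khintchine exponent of the symmetric Gamma jump measure: for every θ > 0 and every p ∈ ℝ, the function y ↦ (e^{ipy} − 1 − i·p·y·1_{{|y| ≤ 1}}) · e^{−θ|y|}/|y| is absolutely integrable on ℝ \ {0} and ∫_{ℝ\{0}} (e^{ipy} − 1 − i·p·y·1_{{|y| ≤ 1}}) · (e^{−θ|y|}/|y|) dy = −ln(1 + p²/θ²). In particular this exponent is real and strictly negative for p ≠ 0. -/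
open MeasureTheory Filter Real Set

lemma abs_cexp_I_mul_sub_one_le (x : ℝ) : ‖(Complex.exp (Complex.I * x) - 1)‖ ≤ |x| := by
  have h1 : Complex.exp (Complex.I * x) - 1 =
      Complex.ofReal (Real.cos x - 1) + Complex.ofReal (Real.sin x) * Complex.I := by
    rw [mul_comm, Complex.exp_mul_I]
    push_cast [Complex.ofReal_cos, Complex.ofReal_sin]
    ring
  rw [h1, ← Real.sqrt_sq (abs_nonneg x), Complex.norm_def]
  apply Real.sqrt_le_sqrt
  rw [Complex.normSq_add_mul_I, sq_abs]
  have h2 := Real.one_sub_sq_div_two_le_cos (x := x)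
  nlinarith [Real.sin_sq_add_cos_sq x]

lemma integrable_exp_neg_mul_abs {θ : ℝ} (hθ : 0 < θ) :
    Integrable (fun y : ℝ => Real.exp (-θ * |y|)) := by
  have h1 : IntegrableOn (fun y : ℝ => Real.exp (-θ * |y|)) (Ioi 0) := by
    apply ((exp_neg_integrableOn_Ioi 0 hθ).congr_fun (fun x hx => ?_) measurableSet_Ioi)
    rw [abs_of_pos hx]
  rw [← integrableOn_univ, ← @Iio_union_Ici _ _ (0 : ℝ), integrableOn_union,
    integrableOn_Ici_iff_integrableOn_Ioi]
  refine ⟨?_, h1⟩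
  rw [← (Measure.measurePreserving_neg (volume : Measure ℝ)).integrableOn_comp_preimage
      (Homeomorph.neg ℝ).measurableEmbedding]
  simp only [Function.comp_def, abs_neg, neg_preimage, neg_Iio, neg_zero]
  exact h1

lemma laplace_sin {θ : ℝ} (hθ : 0 < θ) (s : ℝ) :
    ∫ t in Ioi (0:ℝ), Real.exp (-θ * t) * Real.sin (s * t) = s / (θ^2 + s^2) := by
  set D : ℝ := θ^2 + s^2 with hD
  have hD0 : 0 < D := by positivity
  set F : ℝ → ℝ := fun t => Real.exp (-θ*t) * (-θ * Real.sin (s*t) - s * Real.cos (s*t)) / D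
    with hF
  have hderiv : ∀ t ∈ Ici (0:ℝ), HasDerivAt F (Real.exp (-θ*t) * Real.sin (s*t)) t := by
    intro t _
    have h1 : HasDerivAt (fun t : ℝ => Real.exp (-θ*t)) (-θ * Real.exp (-θ*t)) t := by
      have := (Real.hasDerivAt_exp (-θ*t)).comp t ((hasDerivAt_id t).const_mul (-θ))
      simpa [Function.comp_def, mul_comm] using this
    have h2 : HasDerivAt (fun t : ℝ => Real.sin (s*t)) (s * Real.cos (s*t)) t := by
      have := (Real.hasDerivAt_sin (s*t)).comp t ((hasDerivAt_id t).const_mul s)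
      simpa [Function.comp_def, mul_comm] using this
    have h3 : HasDerivAt (fun t : ℝ => Real.cos (s*t)) (-(s * Real.sin (s*t))) t := by
      have := (Real.hasDerivAt_cos (s*t)).comp t ((hasDerivAt_id t).const_mul s)
      simpa [Function.comp_def, mul_comm] using this
    have h4 := ((h1.mul ((h2.const_mul (-θ)).sub (h3.const_mul s))).div_const D)
    refine h4.congr_deriv ?_
    simp only [Pi.sub_apply]
    rw [div_eq_iff hD0.ne', hD]
    ring
  have f'int : IntegrableOn (fun t => Real.exp (-θ*t) * Real.sin (s*t)) (Ioi (0:ℝ)) := by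
    apply Integrable.mono' (exp_neg_integrableOn_Ioi 0 hθ)
    · exact (Real.continuous_exp.comp (continuous_const.mul continuous_id)).aestronglyMeasurable.mul
        (Real.continuous_sin.comp (continuous_const.mul continuous_id)).aestronglyMeasurable
    · filter_upwards with t
      rw [Real.norm_eq_abs, abs_mul, abs_of_pos (Real.exp_pos _)]
      exact mul_le_of_le_one_right (Real.exp_pos _).le (Real.abs_sin_le_one _)
  have hf : Tendsto F atTop (nhds 0) := by
    apply squeeze_zero_norm (a := fun t => ((θ + |s|)/D) * Real.exp (-θ*t))
    · intro t
      rw [hF, Real.norm_eq_abs, abs_div, abs_of_pos hD0, abs_mul,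
        abs_of_pos (Real.exp_pos _), div_le_iff₀ hD0]
      have h5 : |(-θ * Real.sin (s*t) - s * Real.cos (s*t))| ≤ θ + |s| := by
        refine (abs_sub _ _).trans (add_le_add ?_ ?_)
        · rw [abs_mul, abs_neg, abs_of_pos hθ]
          exact mul_le_of_le_one_right hθ.le (Real.abs_sin_le_one _)
        · rw [abs_mul]
          exact mul_le_of_le_one_right (abs_nonneg s) (Real.abs_cos_le_one _)
      calc Real.exp (-θ*t) * |(-θ * Real.sin (s*t) - s * Real.cos (s*t))|
          ≤ Real.exp (-θ*t) * (θ + |s|) := by gcongr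
        _ = (θ + |s|) / D * Real.exp (-θ*t) * D := by field_simp
    · have h0 : Tendsto (fun t : ℝ => Real.exp (-θ*t)) atTop (nhds 0) := by
        have := Real.tendsto_exp_neg_atTop_nhds_zero.comp (tendsto_id.const_mul_atTop hθ)
        simpa [Function.comp_def, neg_mul] using this
      simpa using h0.const_mul ((θ + |s|)/D)
  have key := integral_Ioi_of_hasDerivAt_of_tendsto' hderiv f'int hf
  rw [key, hF]
  simp [hD]
  field_simp

lemma one_sub_cos_le_abs (x : ℝ) : |1 - Real.cos x| ≤ |x| := by
  have hid : 1 - Real.cos x = 2 * Real.sin (x/2)^2 := by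
    have h := Real.sin_sq_eq_half_sub (x/2)
    rw [show 2*(x/2) = x by ring] at h
    linarith
  have hs1 : |Real.sin (x/2)| ≤ 1 := Real.abs_sin_le_one _
  have hs2 : |Real.sin (x/2)| ≤ |x|/2 := by
    have := Real.abs_sin_le_abs (x := x/2)
    rwa [abs_div, abs_two] at this
  rw [hid, abs_of_nonneg (by positivity)]
  nlinarith [abs_nonneg (Real.sin (x/2)), sq_abs (Real.sin (x/2))]

lemma G_integrable {θ : ℝ} (hθ : 0 < θ) (s : ℝ) :
    IntegrableOn (fun t => (1 - Real.cos (s*t)) * Real.exp (-θ*t) / t) (Ioi (0:ℝ)) := by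
  apply Integrable.mono' ((exp_neg_integrableOn_Ioi 0 hθ).const_mul |s|)
  · apply ContinuousOn.aestronglyMeasurable ?_ measurableSet_Ioi
    apply ContinuousOn.div
    · exact (Continuous.mul (by continuity) (by continuity)).continuousOn
    · exact continuousOn_id
    · exact fun t ht => ne_of_gt ht
  · filter_upwards [ae_restrict_mem measurableSet_Ioi] with t ht
    rw [Real.norm_eq_abs, abs_div, abs_mul, abs_of_pos (Real.exp_pos _), abs_of_pos (show (0:ℝ) < t from ht),
      div_le_iff₀ (show (0:ℝ) < t from ht)]
    calc |1 - Real.cos (s*t)| * Real.exp (-θ*t) ≤ |s*t| * Real.exp (-θ*t) := by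
          exact mul_le_mul_of_nonneg_right (one_sub_cos_le_abs _) (Real.exp_pos _).le
      _ = |s| * Real.exp (-θ*t) * t := by rw [abs_mul, abs_of_pos (show (0:ℝ) < t from ht)]; ring

lemma G_hasDeriv {θ : ℝ} (hθ : 0 < θ) (s₀ : ℝ) :
    HasDerivAt (fun s => ∫ t in Ioi (0:ℝ), (1 - Real.cos (s*t)) * Real.exp (-θ*t) / t)
      (s₀ / (θ^2 + s₀^2)) s₀ := by
  have key := hasDerivAt_integral_of_dominated_loc_of_deriv_le
    (F := fun s t => (1 - Real.cos (s*t)) * Real.exp (-θ*t) / t)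
    (F' := fun s t => Real.exp (-θ*t) * Real.sin (s*t))
    (bound := fun t => Real.exp (-θ*t))
    (μ := volume.restrict (Ioi (0:ℝ))) (x₀ := s₀) (s := Metric.ball s₀ 1) (Metric.ball_mem_nhds s₀ one_pos)
    ?_ ((G_integrable hθ s₀)) ?_ ?_ (exp_neg_integrableOn_Ioi 0 hθ) ?_
  · have := key.2
    rwa [laplace_sin hθ s₀] at this
  · filter_upwards with x
    apply ContinuousOn.aestronglyMeasurable ?_ measurableSet_Ioi
    apply ContinuousOn.div
    · exact (Continuous.mul (by continuity) (by continuity)).continuousOn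
    · exact continuousOn_id
    · exact fun t ht => ne_of_gt ht
  · exact ((Real.continuous_exp.comp (continuous_const.mul continuous_id)).mul
      (Real.continuous_sin.comp (continuous_const.mul continuous_id))).aestronglyMeasurable
  · filter_upwards with t x _
    rw [Real.norm_eq_abs, abs_mul, abs_of_pos (Real.exp_pos _)]
    exact mul_le_of_le_one_right (Real.exp_pos _).le (Real.abs_sin_le_one _)
  · filter_upwards [ae_restrict_mem measurableSet_Ioi] with t ht x _
    have h1 : HasDerivAt (fun s : ℝ => 1 - Real.cos (s*t)) (t * Real.sin (x*t)) x := by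
      have h2 : HasDerivAt (fun s : ℝ => Real.cos (s*t)) (-(t * Real.sin (x*t))) x := by
        have := (Real.hasDerivAt_cos (x*t)).comp x ((hasDerivAt_id x).mul_const t)
        simpa [Function.comp_def, mul_comm] using this
      simpa using h2.const_sub 1
    have h3 := (h1.mul_const (Real.exp (-θ*t))).div_const t
    refine h3.congr_deriv ?_
    rw [div_eq_iff (ne_of_gt (show (0:ℝ) < t from ht))]
    ring

lemma G_value {θ : ℝ} (hθ : 0 < θ) (p : ℝ) :
    ∫ t in Ioi (0:ℝ), (1 - Real.cos (p*t)) * Real.exp (-θ*t) / t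
      = Real.log (1 + p^2/θ^2) / 2 := by
  have hcont : Continuous (fun s : ℝ => s/(θ^2+s^2)) := by
    apply Continuous.div continuous_id (by continuity)
    intro s; positivity
  have h1 := intervalIntegral.integral_eq_sub_of_hasDerivAt
    (f := fun s => ∫ t in Ioi (0:ℝ), (1 - Real.cos (s*t)) * Real.exp (-θ*t) / t)
    (f' := fun s : ℝ => s/(θ^2+s^2))
    (fun s _ => G_hasDeriv hθ s) (hcont.intervalIntegrable 0 p)
  have h2 := intervalIntegral.integral_eq_sub_of_hasDerivAt
    (f := fun s : ℝ => Real.log (θ^2+s^2) / 2)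
    (f' := fun s : ℝ => s/(θ^2+s^2)) (a := 0) (b := p)
    (fun s _ => by
      have hpos : (0:ℝ) < θ^2 + s^2 := by positivity
      have hin : HasDerivAt (fun s : ℝ => θ^2 + s^2) (2*s) s := by
        simpa using (hasDerivAt_pow 2 s).const_add (θ^2)
      have := ((Real.hasDerivAt_log (ne_of_gt hpos)).comp s hin).div_const 2
      refine this.congr_deriv ?_
      ring)
    (hcont.intervalIntegrable 0 p)
  beta_reduce at h1 h2
  have hG0 : (∫ t in Ioi (0:ℝ), (1 - Real.cos ((0:ℝ)*t)) * Real.exp (-θ*t) / t) = 0 := by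
    simp
  rw [hG0, sub_zero] at h1
  rw [h2] at h1
  rw [← h1, show (1 + p^2/θ^2) = (θ^2+p^2)/θ^2 by field_simp,
    Real.log_div (by positivity) (by positivity)]
  norm_num
  ring

/-- Lévy–Khintchine exponent of the symmetric Gamma jump measure: for every
`θ > 0` and `p ∈ ℝ`, the integrand of the Lévy–Khintchine formula with respect
to the jump measure `ν(dy) = e^{-θ|y|}/|y| dy` is absolutely integrable on
`ℝ \ {0}`, the integral equals `- log (1 + p²/θ²)`, and in particular this
exponent is (real and) strictly negative for `p ≠ 0`. -/
theorem gamma_levy_khintchine_exponent (θ p : ℝ) (hθ : 0 < θ) :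
    IntegrableOn
      (fun y : ℝ =>
        (Complex.exp (Complex.I * (p : ℂ) * (y : ℂ)) - 1 -
            Complex.I * (p : ℂ) * (y : ℂ) * (if |y| ≤ 1 then (1 : ℂ) else 0)) *
          ((Real.exp (-θ * |y|) / |y| : ℝ) : ℂ))
      ({(0 : ℝ)}ᶜ) ∧
    (∫ y in ({(0 : ℝ)}ᶜ),
        (Complex.exp (Complex.I * (p : ℂ) * (y : ℂ)) - 1 -
            Complex.I * (p : ℂ) * (y : ℂ) * (if |y| ≤ 1 then (1 : ℂ) else 0)) *
          ((Real.exp (-θ * |y|) / |y| : ℝ) : ℂ)) =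
      ((-Real.log (1 + p ^ 2 / θ ^ 2) : ℝ) : ℂ) ∧
    (p ≠ 0 → -Real.log (1 + p ^ 2 / θ ^ 2) < 0) := by
  set f : ℝ → ℂ := fun y =>
    (Complex.exp (Complex.I * (p : ℂ) * (y : ℂ)) - 1 -
        Complex.I * (p : ℂ) * (y : ℂ) * (if |y| ≤ 1 then (1 : ℂ) else 0)) *
      ((Real.exp (-θ * |y|) / |y| : ℝ) : ℂ) with hf
  set u : ℝ → ℝ := fun y => (Real.cos (p*y) - 1) * (Real.exp (-θ * |y|) / |y|) with hu
  -- measurability of f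
  have hmeas : AEStronglyMeasurable f volume := by
    apply Measurable.aestronglyMeasurable
    apply Measurable.mul
    · apply Measurable.sub
      · apply Measurable.sub
        · exact Complex.measurable_exp.comp (by fun_prop)
        · exact measurable_const
      · apply Measurable.mul (by fun_prop)
        exact Measurable.ite (measurableSet_le (by fun_prop) measurable_const)
          measurable_const measurable_const
    · fun_prop
  -- the pointwise norm bound
  have hbound : ∀ y : ℝ, ‖f y‖ ≤ (2 * |p| + 2) * Real.exp (-θ * |y|) := by
    intro y
    rcases eq_or_ne y 0 with rfl | hy
    · simp [hf]
      positivity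
    · have hy' : 0 < |y| := abs_pos.mpr hy
      have e1 : Complex.I * (p:ℂ) * (y:ℂ) = ((p*y : ℝ) : ℂ) * Complex.I := by push_cast; ring
      rw [hf]
      rw [norm_mul, Complex.norm_real, Real.norm_eq_abs,
        abs_of_nonneg (by positivity : (0:ℝ) ≤ Real.exp (-θ * |y|)/ |y|)]
      rcases le_or_gt |y| 1 with h1 | h1
      · rw [if_pos h1, mul_one]
        have hA : ‖Complex.exp (Complex.I * (p:ℂ) * (y:ℂ)) - 1 - Complex.I * (p:ℂ) * (y:ℂ)‖
            ≤ 2 * |p| * |y| := by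
          calc ‖Complex.exp (Complex.I * (p:ℂ) * (y:ℂ)) - 1 - Complex.I * (p:ℂ) * (y:ℂ)‖
              ≤ ‖Complex.exp (Complex.I * (p:ℂ) * (y:ℂ)) - 1‖ + ‖Complex.I * (p:ℂ) * (y:ℂ)‖ :=
                norm_sub_le _ _
            _ ≤ |p*y| + |p*y| := by
                apply add_le_add
                · rw [e1, mul_comm (((p*y:ℝ)):ℂ) Complex.I]
                  exact abs_cexp_I_mul_sub_one_le (p*y)
                · rw [e1]
                  simp [Complex.norm_real, abs_mul]
            _ = 2 * |p| * |y| := by rw [abs_mul]; ring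
        calc ‖Complex.exp (Complex.I * (p:ℂ) * (y:ℂ)) - 1 - Complex.I * (p:ℂ) * (y:ℂ)‖ *
              (Real.exp (-θ * |y|)/ |y|) ≤ (2 * |p| * |y|) * (Real.exp (-θ * |y|)/ |y|) := by
              apply mul_le_mul_of_nonneg_right hA (by positivity)
          _ = 2 * |p| * Real.exp (-θ * |y|) := by field_simp
          _ ≤ (2 * |p| + 2) * Real.exp (-θ * |y|) := by
              apply mul_le_mul_of_nonneg_right (by linarith) (Real.exp_pos _).le
      · rw [if_neg (not_le.mpr h1), mul_zero, sub_zero]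
        have hA : ‖Complex.exp (Complex.I * (p:ℂ) * (y:ℂ)) - 1‖ ≤ 2 := by
          calc ‖Complex.exp (Complex.I * (p:ℂ) * (y:ℂ)) - 1‖
              ≤ ‖Complex.exp (Complex.I * (p:ℂ) * (y:ℂ))‖ + 1 := by
                simpa using norm_sub_le (Complex.exp (Complex.I * (p:ℂ) * (y:ℂ))) 1
            _ = 2 := by
                rw [e1, Complex.norm_exp_ofReal_mul_I]
                norm_num
        calc ‖Complex.exp (Complex.I * (p:ℂ) * (y:ℂ)) - 1‖ * (Real.exp (-θ * |y|)/ |y|)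
            ≤ 2 * (Real.exp (-θ * |y|)/ |y|) := mul_le_mul_of_nonneg_right hA (by positivity)
          _ ≤ 2 * Real.exp (-θ * |y|) := by
              apply mul_le_mul_of_nonneg_left _ (by norm_num)
              apply div_le_self (Real.exp_pos _).le h1.le
          _ ≤ (2 * |p| + 2) * Real.exp (-θ * |y|) := by
              apply mul_le_mul_of_nonneg_right (by linarith [abs_nonneg p]) (Real.exp_pos _).le
  -- integrability of f
  have hint : Integrable f volume := by
    apply Integrable.mono' ((integrable_exp_neg_mul_abs hθ).const_mul (2 * |p| + 2)) hmeas
    filter_upwards with y using hbound y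
  -- integrability of u
  have humeas : AEStronglyMeasurable u volume := by
    apply Measurable.aestronglyMeasurable
    fun_prop
  have huint : Integrable u volume := by
    apply Integrable.mono' ((integrable_exp_neg_mul_abs hθ).const_mul |p|) humeas
    filter_upwards with y
    rcases eq_or_ne y 0 with rfl | hy
    · simp [hu]
      try positivity
    · have hy' : 0 < |y| := abs_pos.mpr hy
      rw [hu, Real.norm_eq_abs, abs_mul,
        abs_of_nonneg (by positivity : (0:ℝ) ≤ Real.exp (-θ * |y|)/ |y|)]
      calc |Real.cos (p*y) - 1| * (Real.exp (-θ * |y|)/ |y|)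
          ≤ |p*y| * (Real.exp (-θ * |y|)/ |y|) := by
            apply mul_le_mul_of_nonneg_right _ (by positivity)
            rw [abs_sub_comm]
            exact one_sub_cos_le_abs _
        _ = |p| * Real.exp (-θ * |y|) := by rw [abs_mul]; field_simp
  -- the symmetrization identity
  have hsum : ∀ y : ℝ, f y + f (-y) = ((2 * u y : ℝ) : ℂ) := by
    intro y
    rw [hf, hu]
    push_cast
    simp only [abs_neg]
    have e1 : Complex.I * (p:ℂ) * (y:ℂ) = ((p*y : ℝ) : ℂ) * Complex.I := by push_cast; ring
    have e2 : Complex.I * (p:ℂ) * (-(y:ℂ)) = ((-(p*y) : ℝ) : ℂ) * Complex.I := by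
      push_cast; ring
    rw [e1, e2, Complex.exp_mul_I, Complex.exp_mul_I, ← Complex.ofReal_cos, ← Complex.ofReal_sin,
      ← Complex.ofReal_cos, ← Complex.ofReal_sin, Real.cos_neg, Real.sin_neg]
    push_cast
    ring
  -- ∫ f = ∫ u (as complex)
  have hval : ∫ y, f y = ((∫ y, u y : ℝ) : ℂ) := by
    have h2 : (2:ℂ) * ∫ y, f y = ((2 * ∫ y, u y : ℝ) : ℂ) := by
      have ha : ∫ y, f (-y) = ∫ y, f y := integral_neg_eq_self f volume
      have hb : (2:ℂ) * ∫ y, f y = (∫ y, f y) + ∫ y, f (-y) := by rw [ha]; ring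
      rw [hb, ← integral_add hint hint.comp_neg]
      simp_rw [hsum]
      have hcast : ∫ a : ℝ, ((2 * u a : ℝ) : ℂ) = ((∫ a : ℝ, 2 * u a : ℝ) : ℂ) :=
        integral_ofReal
      rw [hcast]
      norm_cast
      simpa [smul_eq_mul] using integral_smul (2:ℝ) u
    have := h2
    push_cast at this
    have h3 := mul_left_cancel₀ (two_ne_zero' ℂ) this
    exact h3
  -- compute ∫ u
  have hu_even : ∀ x : ℝ, u (-x) = u x := by
    intro x
    rw [hu]
    simp [mul_neg, Real.cos_neg, abs_neg]
  have hIoi : ∫ x in Ioi (0:ℝ), u x = -(Real.log (1 + p^2/θ^2) / 2) := by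
    have hcongr : ∫ x in Ioi (0:ℝ), u x
        = ∫ x in Ioi (0:ℝ), -((1 - Real.cos (p*x)) * Real.exp (-θ*x) / x) := by
      apply setIntegral_congr_fun measurableSet_Ioi
      intro x hx
      rw [hu]
      simp only
      rw [abs_of_pos hx]
      ring
    rw [hcongr, integral_neg, G_value hθ p]
  have hsplit : ∫ y, u y = 2 * ∫ x in Ioi (0:ℝ), u x := by
    have hIic : ∫ x in Iic (0:ℝ), u x = ∫ x in Ioi (0:ℝ), u x := by
      have h4 := integral_comp_neg_Ioi (c := 0) (f := u)
      rw [neg_zero] at h4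
      rw [← h4]
      exact setIntegral_congr_fun measurableSet_Ioi (fun x _ => hu_even x)
    rw [← intervalIntegral.integral_Iic_add_Ioi (b := 0)
      huint.integrableOn huint.integrableOn, hIic]
    ring
  have huval : ∫ y, u y = -Real.log (1 + p^2/θ^2) := by
    rw [hsplit, hIoi]; ring
  refine ⟨?_, ?_, ?_⟩
  all_goals have hres : (volume : Measure ℝ).restrict ({(0:ℝ)}ᶜ) = volume := by simp
  · rw [IntegrableOn, hres]
    exact hint
  · have h7 : ∫ y in ({(0:ℝ)}ᶜ), f y = ∫ y, f y := by rw [hres]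
    rw [h7, hval, huval]
  · intro hp
    have h5 : (0:ℝ) < p^2/θ^2 := by positivity
    have h6 := Real.log_pos (by linarith : (1:ℝ) < 1 + p^2/θ^2)
    linarith
end

section
/- Let θ > 0 and let Z be a symmetric Gamma-type process as in the context, and set C = ln(1 + 4/θ²). Then for every t > 0, E[ (1/t) ∫_0^t cos²(Z_s) ds ] = 1/2 + (1 − e^{−Ct})/(2Ct); in particular the time-averaged mean converges to 1/2 as t → ∞. -/
open MeasureTheory Filter Real ProbabilityTheory

/-- For a symmetric Gamma-type process `Z` (with `Z₀ = 0` a.s., independent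
increments, and characteristic function
`E[e^{iu(Z_σ - Z_s)}] = (1 + u²/θ²)^{-(σ-s)}`), setting `C = log (1 + 4/θ²)`,
one has `E[(1/t) ∫₀ᵗ cos²(Z_s) ds] = 1/2 + (1 - e^{-Ct})/(2Ct)` for every
`t > 0`; in particular the time-averaged mean converges to `1/2` as
`t → ∞`. -/
theorem gamma_rotation_time_average_mean
    (Ω : Type*) [MeasurableSpace Ω] (μ : Measure Ω) [IsProbabilityMeasure μ]
    (θ : ℝ) (hθ : 0 < θ) (Z : ℝ → Ω → ℝ)
    (hZmeas : Measurable (Function.uncurry Z))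
    (hZ0 : ∀ᵐ ω ∂μ, Z 0 ω = 0)
    (hindep : ∀ s σ : ℝ, 0 ≤ s → s ≤ σ →
      IndepFun (fun ω => Z σ ω - Z s ω) (Z s) μ)
    (hchar : ∀ (u s σ : ℝ), 0 ≤ s → s ≤ σ →
      (∫ ω, Complex.exp (Complex.I * (u : ℂ) * ((Z σ ω - Z s ω : ℝ) : ℂ)) ∂μ) =
        (((1 + u ^ 2 / θ ^ 2) ^ (-(σ - s)) : ℝ) : ℂ)) :
    (∀ t : ℝ, 0 < t →
      (∫ ω, (1 / t) * (∫ s in (0 : ℝ)..t, (Real.cos (Z s ω)) ^ 2) ∂μ) =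
        1 / 2 + (1 - Real.exp (-(Real.log (1 + 4 / θ ^ 2)) * t)) /
          (2 * Real.log (1 + 4 / θ ^ 2) * t)) ∧
    Tendsto
      (fun t : ℝ => ∫ ω, (1 / t) * (∫ s in (0 : ℝ)..t, (Real.cos (Z s ω)) ^ 2) ∂μ)
      atTop (nhds (1 / 2)) := by
  set a : ℝ := 1 + 4 / θ ^ 2 with ha_def
  have ha1 : 1 < a := by
    have : 0 < 4 / θ ^ 2 := by positivity
    simp only [ha_def]; linarith
  have ha0 : 0 < a := lt_trans one_pos ha1
  set C : ℝ := Real.log a with hC_def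
  have hC : 0 < C := Real.log_pos ha1
  -- measurability of each Z s
  have hZs : ∀ s : ℝ, Measurable (Z s) := fun s =>
    hZmeas.comp measurable_prodMk_left
  -- mean of cos (2 Z s)
  have hcos2 : ∀ s : ℝ, 0 ≤ s → (∫ ω, Real.cos (2 * Z s ω) ∂μ) = Real.exp (-C * s) := by
    intro s hs
    have h := hchar 2 0 s le_rfl hs
    have h2 : (∫ ω, Complex.exp (Complex.I * (2 : ℂ) * ((Z s ω : ℝ) : ℂ)) ∂μ) =
        ((a ^ (-s) : ℝ) : ℂ) := by
      have heq : ((1 + (2:ℝ) ^ 2 / θ ^ 2) ^ (-(s - 0)) : ℝ) = a ^ (-s) := by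
        norm_num [ha_def]
      rw [← heq, ← h]
      apply integral_congr_ae
      filter_upwards [hZ0] with ω hω
      rw [hω]
      norm_num
    have hint : Integrable (fun ω => Complex.exp (Complex.I * (2 : ℂ) * ((Z s ω : ℝ) : ℂ))) μ := by
      apply Integrable.mono' (integrable_const (1 : ℝ))
      · exact (Complex.measurable_exp.comp
          ((measurable_const.mul ((Complex.measurable_ofReal.comp (hZs s)))))).aestronglyMeasurable
      · filter_upwards with ω
        have : Complex.I * (2 : ℂ) * ((Z s ω : ℝ) : ℂ) = ((2 * Z s ω : ℝ) : ℂ) * Complex.I := by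
          push_cast; ring
        rw [this, Complex.norm_exp_ofReal_mul_I]
    have hre := integral_re hint
    simp only [RCLike.re_to_complex] at hre
    rw [h2] at hre
    have hre2 : (∫ ω, Real.cos (2 * Z s ω) ∂μ) = a ^ (-s) := by
      rw [← Complex.ofReal_re (a ^ (-s)), ← hre]
      apply integral_congr_ae
      filter_upwards with ω
      have : Complex.I * (2 : ℂ) * ((Z s ω : ℝ) : ℂ) = ((2 * Z s ω : ℝ) : ℂ) * Complex.I := by
        push_cast; ring
      rw [this]
      exact (Complex.exp_ofReal_mul_I_re _).symm
    rw [hre2, Real.rpow_def_of_pos ha0]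
    congr 1
    rw [hC_def]
    ring
  -- mean of cos² (Z s)
  have hcossq : ∀ s : ℝ, 0 ≤ s →
      (∫ ω, Real.cos (Z s ω) ^ 2 ∂μ) = 1 / 2 + Real.exp (-C * s) / 2 := by
    intro s hs
    have hint2 : Integrable (fun ω => Real.cos (2 * Z s ω)) μ := by
      apply Integrable.mono' (integrable_const (1 : ℝ))
      · exact (Real.measurable_cos.comp ((measurable_const.mul (hZs s)))).aestronglyMeasurable
      · filter_upwards with ω
        exact Real.abs_cos_le_one _
    calc (∫ ω, Real.cos (Z s ω) ^ 2 ∂μ)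
        = ∫ ω, (1 / 2 + Real.cos (2 * Z s ω) / 2) ∂μ := by
          apply integral_congr_ae
          filter_upwards with ω
          exact Real.cos_sq _
      _ = 1 / 2 + Real.exp (-C * s) / 2 := by
          rw [integral_add (integrable_const _) (hint2.div_const 2), integral_const,
            integral_div, hcos2 s hs]
          simp
  -- the main computation for t > 0
  have hmain : ∀ t : ℝ, 0 < t →
      (∫ ω, (1 / t) * (∫ s in (0 : ℝ)..t, (Real.cos (Z s ω)) ^ 2) ∂μ) =
        1 / 2 + (1 - Real.exp (-C * t)) / (2 * C * t) := by
    intro t ht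
    rw [integral_const_mul]
    have hswap : (∫ ω, (∫ s in (0 : ℝ)..t, (Real.cos (Z s ω)) ^ 2) ∂μ) =
        ∫ s in (0 : ℝ)..t, (∫ ω, (Real.cos (Z s ω)) ^ 2 ∂μ) := by
      have hIoc : ∀ ω, (∫ s in (0 : ℝ)..t, (Real.cos (Z s ω)) ^ 2) =
          ∫ s in Set.Ioc (0:ℝ) t, (Real.cos (Z s ω)) ^ 2 := fun ω =>
        intervalIntegral.integral_of_le ht.le
      simp_rw [hIoc, intervalIntegral.integral_of_le ht.le]
      apply integral_integral_swap
      apply Integrable.mono' (integrable_const (1 : ℝ))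
      · apply Measurable.aestronglyMeasurable
        have : Measurable fun p : Ω × ℝ => Z p.2 p.1 :=
          hZmeas.comp measurable_swap
        exact (Real.measurable_cos.comp this).pow_const 2
      · filter_upwards with p
        simp only [Function.uncurry, Real.norm_eq_abs, abs_pow, sq_abs]
        calc Real.cos (Z p.2 p.1) ^ 2 ≤ 1 ^ 2 := by
              apply sq_le_sq'
              · linarith [Real.neg_one_le_cos (Z p.2 p.1)]
              · exact Real.cos_le_one _
          _ = 1 := one_pow 2
    rw [hswap]
    have hcongr : (∫ s in (0 : ℝ)..t, (∫ ω, (Real.cos (Z s ω)) ^ 2 ∂μ)) =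
        ∫ s in (0 : ℝ)..t, (1 / 2 + Real.exp (-C * s) / 2) := by
      apply intervalIntegral.integral_congr
      intro s hsmem
      rw [Set.uIcc_of_le ht.le] at hsmem
      exact hcossq s hsmem.1
    rw [hcongr]
    have hexp : (∫ s in (0 : ℝ)..t, Real.exp (-C * s)) = (1 - Real.exp (-C * t)) / C := by
      have hderiv : ∀ x ∈ Set.uIcc (0:ℝ) t,
          HasDerivAt (fun s => -Real.exp (-C * s) / C) (Real.exp (-C * x)) x := by
        intro x _
        have h1 : HasDerivAt (fun s : ℝ => -C * s) (-C) x := by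
          simpa using (hasDerivAt_id x).const_mul (-C)
        have h2 := h1.exp
        have h3 : HasDerivAt (fun s => -Real.exp (-C * s) / C) (-(Real.exp (-C * x) * -C) / C) x :=
          (h2.neg).div_const C
        convert h3 using 1
        field_simp
      rw [intervalIntegral.integral_eq_sub_of_hasDerivAt hderiv]
      · field_simp
        simp only [mul_zero, neg_zero, Real.exp_zero]
        ring
      · apply Continuous.intervalIntegrable
        continuity
    rw [intervalIntegral.integral_add intervalIntegrable_const]
    · rw [intervalIntegral.integral_const, intervalIntegral.integral_div, hexp]
      field_simp
      ring
    · apply IntervalIntegrable.div_const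
      apply Continuous.intervalIntegrable
      continuity
  refine ⟨hmain, ?_⟩
  have hlim : Tendsto (fun t : ℝ => 1 / 2 + (1 - Real.exp (-C * t)) / (2 * C * t))
      atTop (nhds (1 / 2)) := by
    have h0 : Tendsto (fun t : ℝ => (1 - Real.exp (-C * t)) / (2 * C * t)) atTop (nhds 0) := by
      apply Tendsto.div_atTop (f := fun t => 1 - Real.exp (-C * t)) (l := atTop) (a := 1 - 0)
      · apply Tendsto.const_sub
        have hct : Tendsto (fun t : ℝ => C * t) atTop atTop :=
          Tendsto.const_mul_atTop hC tendsto_id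
        have hcomp := Real.tendsto_exp_neg_atTop_nhds_zero.comp hct
        simpa [Function.comp_def, neg_mul] using hcomp
      · exact Tendsto.const_mul_atTop (by positivity) tendsto_id
    have := h0.const_add (1 / 2 : ℝ)
    simpa using this
  apply hlim.congr'
  filter_upwards [eventually_gt_atTop (0 : ℝ)] with t ht
  exact (hmain t ht).symm
end

section
/- Quantitative ergodicity of random rotations (verification of Hypothesis 2 with rate η(t) = K/√t): let θ > 0 and let Z be a symmetric Gamma-type process as in the context. Then there exists a constant K > 0, depending only on θ, such that for all t ≥ 1: E[ ( (1/t) ∫_0^t cos²(Z_s) ds − 1/2 )² ] ≤ K/t. -/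
open MeasureTheory Filter Real ProbabilityTheory

lemma expChar {Ω : Type*} [MeasurableSpace Ω] (μ : Measure Ω) [IsProbabilityMeasure μ]
    (X : Ω → ℝ) (hX : Measurable X) (v : ℝ)
    (h : (∫ ω, Complex.exp (Complex.I * (2 : ℂ) * ((X ω : ℝ) : ℂ)) ∂μ) = ((v : ℝ) : ℂ)) :
    (∫ ω, Real.cos (2 * X ω) ∂μ) = v ∧ (∫ ω, Real.sin (2 * X ω) ∂μ) = 0 := by
  have hre : ∀ ω, Complex.I * (2 : ℂ) * ((X ω : ℝ) : ℂ) = (((2 * X ω : ℝ)) : ℂ) * Complex.I := by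
    intro ω; push_cast; ring
  have hint : Integrable (fun ω => Complex.exp (Complex.I * (2 : ℂ) * ((X ω : ℝ) : ℂ))) μ := by
    have hm : Measurable fun ω => Complex.exp (Complex.I * (2 : ℂ) * ((X ω : ℝ) : ℂ)) := by
      apply Complex.measurable_exp.comp
      exact (measurable_const.mul (Complex.measurable_ofReal.comp hX))
    refine (integrable_const (1 : ℝ)).mono' hm.aestronglyMeasurable
      (Filter.Eventually.of_forall fun ω => ?_)
    rw [hre ω]
    simp [Complex.norm_exp]
  constructor
  · have := integral_re (μ := μ) hint
    rw [h] at this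
    simp at this
    rw [← this]
    congr 1; ext ω
    rw [hre ω, Complex.exp_ofReal_mul_I_re]
  · have := integral_im (μ := μ) hint
    rw [h] at this
    simp at this
    rw [← this]
    congr 1; ext ω
    rw [hre ω, Complex.exp_ofReal_mul_I_im]

lemma bounded_integrable {Ω : Type*} [MeasurableSpace Ω] (μ : Measure Ω) [IsProbabilityMeasure μ]
    {f : Ω → ℝ} (hm : Measurable f) (C : ℝ) (hb : ∀ ω, |f ω| ≤ C) : Integrable f μ :=
  (integrable_const C).mono' hm.aestronglyMeasurable
    (Filter.Eventually.of_forall fun ω => by simpa using hb ω)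

lemma corr_bound {Ω : Type*} [MeasurableSpace Ω] (μ : Measure Ω) [IsProbabilityMeasure μ]
    (Z : ℝ → Ω → ℝ) (hZmeas : Measurable (Function.uncurry Z))
    (s σ : ℝ) (hs : 0 ≤ s) (hsσ : s ≤ σ)
    (hind : IndepFun (fun ω => Z σ ω - Z s ω) (Z s) μ)
    (v : ℝ)
    (hcos : (∫ ω, Real.cos (2 * (Z σ ω - Z s ω)) ∂μ) = v)
    (hsin : (∫ ω, Real.sin (2 * (Z σ ω - Z s ω)) ∂μ) = 0) (hv : 0 ≤ v) :
    |∫ ω, Real.cos (2 * Z s ω) * Real.cos (2 * Z σ ω) ∂μ| ≤ v := by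
  have hZsec : ∀ u : ℝ, Measurable (Z u) := fun u => hZmeas.comp measurable_prodMk_left
  set Δ : Ω → ℝ := fun ω => Z σ ω - Z s ω with hΔ
  have hΔm : Measurable Δ := (hZsec σ).sub (hZsec s)
  have hCm : Measurable fun ω => Real.cos (2 * Z s ω) :=
    Real.continuous_cos.measurable.comp ((hZsec s).const_mul 2)
  have hSm : Measurable fun ω => Real.sin (2 * Z s ω) :=
    Real.continuous_sin.measurable.comp ((hZsec s).const_mul 2)
  have hCdm : Measurable fun ω => Real.cos (2 * Δ ω) :=
    Real.continuous_cos.measurable.comp (hΔm.const_mul 2)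
  have hSdm : Measurable fun ω => Real.sin (2 * Δ ω) :=
    Real.continuous_sin.measurable.comp (hΔm.const_mul 2)
  have key : ∀ ω, Real.cos (2 * Z s ω) * Real.cos (2 * Z σ ω)
      = (Real.cos (2 * Z s ω) * Real.cos (2 * Z s ω)) * Real.cos (2 * Δ ω)
        - (Real.cos (2 * Z s ω) * Real.sin (2 * Z s ω)) * Real.sin (2 * Δ ω) := by
    intro ω
    have h2 : 2 * Z σ ω = 2 * Z s ω + 2 * Δ ω := by rw [hΔ]; ring
    rw [h2, Real.cos_add]; ring
  have hind1 : IndepFun (fun ω => Real.cos (2 * Z s ω) * Real.cos (2 * Z s ω))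
      (fun ω => Real.cos (2 * Δ ω)) μ := by
    have := (hind.symm.comp (φ := fun x : ℝ => Real.cos (2*x) * Real.cos (2*x))
      (ψ := fun x : ℝ => Real.cos (2*x))
      ((Real.continuous_cos.measurable.comp (measurable_id.const_mul 2)).mul
        (Real.continuous_cos.measurable.comp (measurable_id.const_mul 2)))
      (Real.continuous_cos.measurable.comp (measurable_id.const_mul 2)))
    exact this
  have hind2 : IndepFun (fun ω => Real.cos (2 * Z s ω) * Real.sin (2 * Z s ω))
      (fun ω => Real.sin (2 * Δ ω)) μ := by
    have := (hind.symm.comp (φ := fun x : ℝ => Real.cos (2*x) * Real.sin (2*x))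
      (ψ := fun x : ℝ => Real.sin (2*x))
      ((Real.continuous_cos.measurable.comp (measurable_id.const_mul 2)).mul
        (Real.continuous_sin.measurable.comp (measurable_id.const_mul 2)))
      (Real.continuous_sin.measurable.comp (measurable_id.const_mul 2)))
    exact this
  have iCC : Integrable (fun ω => Real.cos (2 * Z s ω) * Real.cos (2 * Z s ω)) μ :=
    bounded_integrable μ (hCm.mul hCm) 1 (fun ω => by
      rw [abs_mul]
      exact mul_le_one₀ (Real.abs_cos_le_one _) (abs_nonneg _) (Real.abs_cos_le_one _))
  have iCS : Integrable (fun ω => Real.cos (2 * Z s ω) * Real.sin (2 * Z s ω)) μ :=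
    bounded_integrable μ (hCm.mul hSm) 1 (fun ω => by
      rw [abs_mul]
      exact mul_le_one₀ (Real.abs_cos_le_one _) (abs_nonneg _) (Real.abs_sin_le_one _))
  have iCd : Integrable (fun ω => Real.cos (2 * Δ ω)) μ :=
    bounded_integrable μ hCdm 1 (fun ω => Real.abs_cos_le_one _)
  have iSd : Integrable (fun ω => Real.sin (2 * Δ ω)) μ :=
    bounded_integrable μ hSdm 1 (fun ω => Real.abs_sin_le_one _)
  have iprod1 : Integrable (fun ω => (Real.cos (2 * Z s ω) * Real.cos (2 * Z s ω)) * Real.cos (2 * Δ ω)) μ :=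
    bounded_integrable μ ((hCm.mul hCm).mul hCdm) 1 (fun ω => by
      rw [abs_mul, abs_mul]
      exact mul_le_one₀ (mul_le_one₀ (Real.abs_cos_le_one _) (abs_nonneg _) (Real.abs_cos_le_one _))
        (abs_nonneg _) (Real.abs_cos_le_one _))
  have iprod2 : Integrable (fun ω => (Real.cos (2 * Z s ω) * Real.sin (2 * Z s ω)) * Real.sin (2 * Δ ω)) μ :=
    bounded_integrable μ ((hCm.mul hSm).mul hSdm) 1 (fun ω => by
      rw [abs_mul, abs_mul]
      exact mul_le_one₀ (mul_le_one₀ (Real.abs_cos_le_one _) (abs_nonneg _) (Real.abs_sin_le_one _))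
        (abs_nonneg _) (Real.abs_sin_le_one _))
  have split : (∫ ω, Real.cos (2 * Z s ω) * Real.cos (2 * Z σ ω) ∂μ)
      = (∫ ω, Real.cos (2 * Z s ω) * Real.cos (2 * Z s ω) ∂μ) * v := by
    calc (∫ ω, Real.cos (2 * Z s ω) * Real.cos (2 * Z σ ω) ∂μ)
        = ∫ ω, ((Real.cos (2 * Z s ω) * Real.cos (2 * Z s ω)) * Real.cos (2 * Δ ω)
            - (Real.cos (2 * Z s ω) * Real.sin (2 * Z s ω)) * Real.sin (2 * Δ ω)) ∂μ := by
          exact integral_congr_ae (Filter.Eventually.of_forall key)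
      _ = (∫ ω, (Real.cos (2 * Z s ω) * Real.cos (2 * Z s ω)) * Real.cos (2 * Δ ω) ∂μ)
            - ∫ ω, (Real.cos (2 * Z s ω) * Real.sin (2 * Z s ω)) * Real.sin (2 * Δ ω) ∂μ :=
          integral_sub iprod1 iprod2
      _ = (∫ ω, Real.cos (2 * Z s ω) * Real.cos (2 * Z s ω) ∂μ) * (∫ ω, Real.cos (2 * Δ ω) ∂μ)
            - (∫ ω, Real.cos (2 * Z s ω) * Real.sin (2 * Z s ω) ∂μ) * (∫ ω, Real.sin (2 * Δ ω) ∂μ) := by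
          have e1 := hind1.integral_mul_eq_mul_integral iCC.aestronglyMeasurable iCd.aestronglyMeasurable
          have e2 := hind2.integral_mul_eq_mul_integral iCS.aestronglyMeasurable iSd.aestronglyMeasurable
          rw [← e1, ← e2]
          rfl
      _ = (∫ ω, Real.cos (2 * Z s ω) * Real.cos (2 * Z s ω) ∂μ) * v := by
          rw [hcos, hsin]; ring
  rw [split, abs_mul, abs_of_nonneg hv]
  have hle1 : |∫ ω, Real.cos (2 * Z s ω) * Real.cos (2 * Z s ω) ∂μ| ≤ 1 := by
    have : ∀ ω, |Real.cos (2 * Z s ω) * Real.cos (2 * Z s ω)| ≤ 1 := fun ω => by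
      rw [abs_mul]
      exact mul_le_one₀ (Real.abs_cos_le_one _) (abs_nonneg _) (Real.abs_cos_le_one _)
    calc |∫ ω, Real.cos (2 * Z s ω) * Real.cos (2 * Z s ω) ∂μ|
        ≤ ∫ ω, |Real.cos (2 * Z s ω) * Real.cos (2 * Z s ω)| ∂μ := by
          simpa [Real.norm_eq_abs] using
            norm_integral_le_integral_norm (fun ω => Real.cos (2 * Z s ω) * Real.cos (2 * Z s ω)) (μ := μ)
      _ ≤ ∫ _ω, (1 : ℝ) ∂μ := integral_mono iCC.abs (integrable_const 1)
            (fun ω => this ω)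
      _ = 1 := by simp
  nlinarith [abs_nonneg (∫ ω, Real.cos (2 * Z s ω) * Real.cos (2 * Z s ω) ∂μ)]



lemma exp_abs_integrable {c : ℝ} (hc : 0 < c) :
    Integrable (fun x : ℝ => Real.exp (-(c * |x|))) volume := by
  have hmeas : Measurable fun x : ℝ => Real.exp (-(c * |x|)) :=
    (Real.continuous_exp.comp (continuous_const.mul continuous_abs).neg).measurable
  have hIoi : IntegrableOn (fun x : ℝ => Real.exp (-(c * |x|))) (Set.Ici 0) := by
    have h1 : IntegrableOn (fun x : ℝ => Real.exp (-c * x)) (Set.Ioi 0) :=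
      exp_neg_integrableOn_Ioi 0 hc
    have h2 : IntegrableOn (fun x : ℝ => Real.exp (-c * x)) (Set.Ici 0) := by
      rwa [integrableOn_Ici_iff_integrableOn_Ioi]
    apply h2.congr_fun _ measurableSet_Ici
    intro x hx
    show Real.exp (-c * x) = Real.exp (-(c * |x|))
    rw [abs_of_nonneg (Set.mem_Ici.mp hx)]; ring_nf
  have hIic : IntegrableOn (fun x : ℝ => Real.exp (-(c * |x|))) (Set.Iic 0) := by
    have m : MeasurableEmbedding fun x : ℝ => -x :=
      (Homeomorph.neg ℝ).measurableEmbedding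
    rw [show (volume : Measure ℝ) = Measure.map (fun x => -x) volume from
      (Measure.map_neg_eq_self _).symm, m.integrableOn_map_iff]
    simp only [Function.comp_def, abs_neg, Set.neg_preimage, Set.neg_Iic, neg_zero]
    exact hIoi
  have : IntegrableOn (fun x : ℝ => Real.exp (-(c * |x|))) (Set.Iic 0 ∪ Set.Ici 0) :=
    hIic.union hIoi
  rwa [Set.Iic_union_Ici, integrableOn_univ] at this

lemma exp_abs_integral {c : ℝ} (hc : 0 < c) :
    (∫ x : ℝ, Real.exp (-(c * |x|))) = 2 / c := by
  have : (∫ x : ℝ, Real.exp (-(c * |x|))) = 2 * ∫ x in Set.Ioi (0:ℝ), Real.exp (-(c * x)) :=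
    integral_comp_abs (f := fun x => Real.exp (-(c * x)))
  rw [this]
  have h2 : (∫ x in Set.Ioi (0:ℝ), Real.exp (-(c * x)))
      = c⁻¹ • ∫ x in Set.Ioi (c * 0 : ℝ), Real.exp (-x) :=
    integral_comp_mul_left_Ioi (fun x => Real.exp (-x)) 0 hc
  rw [h2, mul_zero, integral_exp_neg_Ioi_zero]
  rw [smul_eq_mul]
  field_simp

lemma corr_bound2 {Ω : Type*} [MeasurableSpace Ω] (μ : Measure Ω) [IsProbabilityMeasure μ]
    (θ : ℝ) (hθ : 0 < θ) (Z : ℝ → Ω → ℝ)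
    (hZmeas : Measurable (Function.uncurry Z))
    (hindep : ∀ s σ : ℝ, 0 ≤ s → s ≤ σ →
      IndepFun (fun ω => Z σ ω - Z s ω) (Z s) μ)
    (hchar : ∀ (u s σ : ℝ), 0 ≤ s → s ≤ σ →
      (∫ ω, Complex.exp (Complex.I * (u : ℂ) * ((Z σ ω - Z s ω : ℝ) : ℂ)) ∂μ) =
        (((1 + u ^ 2 / θ ^ 2) ^ (-(σ - s)) : ℝ) : ℂ))
    (s σ : ℝ) (hs : 0 ≤ s) (hσ : 0 ≤ σ) :
    |∫ ω, Real.cos (2 * Z s ω) * Real.cos (2 * Z σ ω) ∂μ|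
      ≤ Real.exp (-(Real.log (1 + 4 / θ ^ 2) * |σ - s|)) := by
  have hZsec : ∀ u : ℝ, Measurable (Z u) := fun u => hZmeas.comp measurable_prodMk_left
  have ha0 : (0:ℝ) < 1 + 4 / θ ^ 2 := by positivity
  have key : ∀ s σ : ℝ, 0 ≤ s → s ≤ σ →
      |∫ ω, Real.cos (2 * Z s ω) * Real.cos (2 * Z σ ω) ∂μ|
        ≤ Real.exp (-(Real.log (1 + 4 / θ ^ 2) * (σ - s))) := by
    intro s σ hs hsσ
    have hch := hchar 2 s σ hs hsσ
    have hch' : (∫ ω, Complex.exp (Complex.I * (2 : ℂ) * (((fun ω => Z σ ω - Z s ω) ω : ℝ) : ℂ)) ∂μ)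
        = ((((1 + 4 / θ ^ 2 : ℝ) ^ (-(σ - s)) : ℝ) : ℝ) : ℂ) := by
      convert hch using 3 <;> norm_num
    have hec := expChar μ (fun ω => Z σ ω - Z s ω) ((hZsec σ).sub (hZsec s))
      ((1 + 4 / θ ^ 2 : ℝ) ^ (-(σ - s)) : ℝ) hch'
    have hval : ((1 + 4 / θ ^ 2 : ℝ) ^ (-(σ - s)) : ℝ)
        = Real.exp (-(Real.log (1 + 4 / θ ^ 2) * (σ - s))) := by
      rw [Real.rpow_def_of_pos ha0]; ring_nf
    have hcos : (∫ ω, Real.cos (2 * (Z σ ω - Z s ω)) ∂μ)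
        = Real.exp (-(Real.log (1 + 4 / θ ^ 2) * (σ - s))) := by
      rw [← hval]; exact hec.1
    have hsin : (∫ ω, Real.sin (2 * (Z σ ω - Z s ω)) ∂μ) = 0 := hec.2
    exact corr_bound μ Z hZmeas s σ hs hsσ (hindep s σ hs hsσ) _
      hcos hsin (Real.exp_pos _).le
  rcases le_total s σ with h | h
  · rw [abs_of_nonneg (by linarith : (0:ℝ) ≤ σ - s)]
    exact key s σ hs h
  · rw [abs_of_nonpos (by linarith : σ - s ≤ 0)]
    have := key σ s hσ h
    have hcomm : (∫ ω, Real.cos (2 * Z s ω) * Real.cos (2 * Z σ ω) ∂μ)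
        = ∫ ω, Real.cos (2 * Z σ ω) * Real.cos (2 * Z s ω) ∂μ := by
      congr 1; ext ω; ring
    rw [hcomm]
    simpa [neg_sub] using this

/-- Quantitative ergodicity of random rotations (verification of Hypothesis 2
with rate `η(t) = K/√t`): for a symmetric Gamma-type process `Z`, there is a
constant `K > 0`, depending only on `θ`, such that for all `t ≥ 1` the second
moment of the deviation of the time average of `cos²(Z_s)` from `1/2` is at
most `K/t`. -/
theorem gamma_rotation_quantitative_ergodicity
    (Ω : Type*) [MeasurableSpace Ω] (μ : Measure Ω) [IsProbabilityMeasure μ]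
    (θ : ℝ) (hθ : 0 < θ) (Z : ℝ → Ω → ℝ)
    (hZmeas : Measurable (Function.uncurry Z))
    (hZ0 : ∀ᵐ ω ∂μ, Z 0 ω = 0)
    (hindep : ∀ s σ : ℝ, 0 ≤ s → s ≤ σ →
      IndepFun (fun ω => Z σ ω - Z s ω) (Z s) μ)
    (hchar : ∀ (u s σ : ℝ), 0 ≤ s → s ≤ σ →
      (∫ ω, Complex.exp (Complex.I * (u : ℂ) * ((Z σ ω - Z s ω : ℝ) : ℂ)) ∂μ) =
        (((1 + u ^ 2 / θ ^ 2) ^ (-(σ - s)) : ℝ) : ℂ)) :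
    ∃ K : ℝ, 0 < K ∧ ∀ t : ℝ, 1 ≤ t →
      (∫ ω, ((1 / t) * (∫ s in (0 : ℝ)..t, (Real.cos (Z s ω)) ^ 2) - 1 / 2) ^ 2 ∂μ)
        ≤ K / t := by
  have hZsec : ∀ u : ℝ, Measurable (Z u) := fun u => hZmeas.comp measurable_prodMk_left
  set c : ℝ := Real.log (1 + 4 / θ ^ 2) with hcdef
  have hc : 0 < c := Real.log_pos (by
    have h4 : (0:ℝ) < 4 / θ ^ 2 := by positivity
    linarith)
  refine ⟨1 / (2 * c), by positivity, fun t ht => ?_⟩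
  have ht0 : (0:ℝ) < t := lt_of_lt_of_le one_pos ht
  set ν : Measure ℝ := volume.restrict (Set.Ioc (0:ℝ) t) with hνdef
  haveI hνfin : IsFiniteMeasure ν := by
    constructor
    rw [hνdef, Measure.restrict_apply_univ, Real.volume_Ioc]
    exact ENNReal.ofReal_lt_top
  -- pointwise rewrite
  have hF : ∀ ω, (1 / t) * (∫ s in (0 : ℝ)..t, (Real.cos (Z s ω)) ^ 2) - 1 / 2
      = (∫ s in (0 : ℝ)..t, Real.cos (2 * Z s ω)) / (2 * t) := by
    intro ω
    have hsm : Measurable fun s : ℝ => Z s ω :=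
      hZmeas.comp (measurable_id.prodMk measurable_const)
    have hgint : IntervalIntegrable (fun s => Real.cos (2 * Z s ω)) volume 0 t := by
      rw [intervalIntegrable_iff]
      refine (integrableOn_const (C := (1:ℝ)) measure_Ioc_lt_top.ne).mono'
        ((Real.continuous_cos.measurable.comp (hsm.const_mul 2)).aestronglyMeasurable) ?_
      exact Filter.Eventually.of_forall fun s => by
        simpa using Real.abs_cos_le_one (2 * Z s ω)
    have hrw : (∫ s in (0 : ℝ)..t, (Real.cos (Z s ω)) ^ 2)
        = ∫ s in (0 : ℝ)..t, (1 / 2 + Real.cos (2 * Z s ω) / 2) := by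
      apply intervalIntegral.integral_congr
      intro s _
      exact Real.cos_sq (Z s ω)
    rw [hrw, intervalIntegral.integral_add (intervalIntegrable_const) (hgint.div_const 2),
      intervalIntegral.integral_div, intervalIntegral.integral_const]
    field_simp
    simp only [intervalIntegral.integral_mul_const, intervalIntegral.integral_div, intervalIntegral.integral_const_mul]
    ring
  simp only [hF]
  -- product structure
  set g : ℝ → Ω → ℝ := fun s ω => Real.cos (2 * Z s ω) with hgdef
  have hgm : ∀ s, Measurable (g s) := fun s =>
    Real.continuous_cos.measurable.comp ((hZsec s).const_mul 2)
  have hcorr : ∀ s σ : ℝ, 0 ≤ s → 0 ≤ σ →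
      |∫ ω, g s ω * g σ ω ∂μ| ≤ Real.exp (-(c * |σ - s|)) :=
    fun s σ hs hσ => corr_bound2 μ θ hθ Z hZmeas hindep hchar s σ hs hσ
  have hHm : Measurable fun q : Ω × (ℝ × ℝ) => g q.2.1 q.1 * g q.2.2 q.1 := by
    have h1 : Measurable fun q : Ω × (ℝ × ℝ) => Z q.2.1 q.1 :=
      hZmeas.comp ((measurable_fst.comp measurable_snd).prodMk measurable_fst)
    have h2 : Measurable fun q : Ω × (ℝ × ℝ) => Z q.2.2 q.1 :=
      hZmeas.comp ((measurable_snd.comp measurable_snd).prodMk measurable_fst)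
    exact (Real.continuous_cos.measurable.comp (h1.const_mul 2)).mul
      (Real.continuous_cos.measurable.comp (h2.const_mul 2))
  have hHint : Integrable (Function.uncurry fun ω p => g p.1 ω * g p.2 ω) (μ.prod (ν.prod ν)) := by
    refine (integrable_const (1:ℝ)).mono' hHm.aestronglyMeasurable ?_
    refine Filter.Eventually.of_forall fun q => ?_
    rcases q with ⟨ω, p⟩
    simp only [Function.uncurry_apply_pair, Real.norm_eq_abs, abs_mul, hgdef]
    exact mul_le_one₀ (Real.abs_cos_le_one _) (abs_nonneg _) (Real.abs_cos_le_one _)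
  -- F ω ^2 as double integral
  have hFsq : ∀ ω, ((∫ s in (0 : ℝ)..t, g s ω) / (2 * t)) ^ 2
      = (∫ p, g p.1 ω * g p.2 ω ∂(ν.prod ν)) / (2 * t) ^ 2 := by
    intro ω
    rw [div_pow]
    congr 1
    rw [pow_two, intervalIntegral.integral_of_le ht0.le]
    exact (integral_prod_mul (μ := ν) (ν := ν) (fun s => g s ω) (fun s => g s ω)).symm
  show ∫ ω, ((∫ s in (0:ℝ)..t, g s ω) / (2 * t)) ^ 2 ∂μ ≤ 1 / (2 * c) / t
  simp only [hFsq]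
  rw [integral_div]
  -- swap
  have hswap : (∫ ω, ∫ p, g p.1 ω * g p.2 ω ∂(ν.prod ν) ∂μ)
      = ∫ p, ∫ ω, g p.1 ω * g p.2 ω ∂μ ∂(ν.prod ν) :=
    integral_integral_swap hHint
  rw [hswap]
  -- bound the double integral
  have hBint : Integrable (fun p : ℝ × ℝ => Real.exp (-(c * |p.2 - p.1|))) (ν.prod ν) := by
    refine (integrable_const (1:ℝ)).mono'
      ((Real.continuous_exp.comp
        ((continuous_const.mul ((continuous_snd.sub continuous_fst).abs)).neg)).measurable.aestronglyMeasurable) ?_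
    refine Filter.Eventually.of_forall fun p => ?_
    rw [Real.norm_eq_abs, abs_of_pos (Real.exp_pos _)]
    exact Real.exp_le_one_iff.mpr (neg_nonpos.mpr (by positivity))
  have hIint : Integrable (fun p : ℝ × ℝ => ∫ ω, g p.1 ω * g p.2 ω ∂μ) (ν.prod ν) :=
    hHint.integral_prod_right
  have hmono : (∫ p, ∫ ω, g p.1 ω * g p.2 ω ∂μ ∂(ν.prod ν))
      ≤ ∫ p, Real.exp (-(c * |p.2 - p.1|)) ∂(ν.prod ν) := by
    refine integral_mono_ae hIint hBint ?_
    have hmem : ∀ᵐ p ∂(ν.prod ν), p ∈ (Set.Ioc (0:ℝ) t) ×ˢ (Set.Ioc (0:ℝ) t) := by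
      rw [hνdef, Measure.prod_restrict]
      exact ae_restrict_mem (measurableSet_Ioc.prod measurableSet_Ioc)
    filter_upwards [hmem] with p hp
    have h1 : (0:ℝ) ≤ p.1 := (hp.1.1).le
    have h2 : (0:ℝ) ≤ p.2 := (hp.2.1).le
    exact (le_abs_self _).trans (hcorr p.1 p.2 h1 h2)
  have hBval : (∫ p, Real.exp (-(c * |p.2 - p.1|)) ∂(ν.prod ν)) ≤ 2 / c * t := by
    rw [integral_prod _ hBint]
    have hinner : ∀ s : ℝ, (∫ σ, Real.exp (-(c * |σ - s|)) ∂ν) ≤ 2 / c := by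
      intro s
      have hti : Integrable (fun σ : ℝ => Real.exp (-(c * |σ - s|))) volume :=
        (exp_abs_integrable hc).comp_sub_right s
      have hle : (∫ σ, Real.exp (-(c * |σ - s|)) ∂ν) ≤ ∫ σ : ℝ, Real.exp (-(c * |σ - s|)) := by
        rw [hνdef]
        exact setIntegral_le_integral hti
          (Filter.Eventually.of_forall fun σ => (Real.exp_pos _).le)
      have hval : (∫ σ : ℝ, Real.exp (-(c * |σ - s|))) = 2 / c := by
        rw [show (fun σ : ℝ => Real.exp (-(c * |σ - s|)))
            = fun σ : ℝ => (fun x : ℝ => Real.exp (-(c * |x|))) (σ - s) from rfl,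
          integral_sub_right_eq_self (fun x : ℝ => Real.exp (-(c * |x|))) s]
        exact exp_abs_integral hc
      linarith
    have houter : (∫ s, (∫ σ, Real.exp (-(c * |σ - s|)) ∂ν) ∂ν) ≤ ∫ _s, (2 / c) ∂ν := by
      refine integral_mono hBint.integral_prod_left (integrable_const _) hinner
    refine houter.trans ?_
    rw [integral_const, smul_eq_mul]
    have : (ν Set.univ).toReal = t := by
      rw [hνdef, Measure.restrict_apply_univ, Real.volume_Ioc, sub_zero,
        ENNReal.toReal_ofReal ht0.le]
    rw [measureReal_def, this, mul_comm]
  -- final arithmetic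
  have hfinal : (∫ p, ∫ ω, g p.1 ω * g p.2 ω ∂μ ∂(ν.prod ν)) ≤ 2 / c * t :=
    hmono.trans hBval
  calc (∫ p, ∫ ω, g p.1 ω * g p.2 ω ∂μ ∂(ν.prod ν)) / (2 * t) ^ 2
      ≤ (2 / c * t) / (2 * t) ^ 2 := by gcongr
    _ = (1 / (2 * c)) / t := by field_simp
end
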